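/- arXiv:1902.09048 — 6 statements merged into one kernel-verified Lean document; each statement's English description precedes it below -/
import Mathlib

section
/- The Haar measure (normalized so that μ(ℤ₂)=1) of the set of pairs (a,b) ∈ ℤ₂² such that ab+1 is a square in ℤ₂ equals 1/3. -/
open MeasureTheory

noncomputable instance (p : ℕ) [Fact p.Prime] : MeasurableSpace ℤ_[p] := borel _
instance (p : ℕ) [Fact p.Prime] : BorelSpace ℤ_[p] := ⟨rfl⟩

/-- The Haar measure on ℤ_p, normalized so that μ(ℤ_p) = 1. -/
noncomputable def μZp (p : ℕ) [Fact p.Prime] : Measure ℤ_[p] :=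
  Measure.addHaarMeasure ⊤

namespace SqAux

open PadicInt Polynomial
open scoped ENNReal

noncomputable def μ2 : Measure ℤ_[2] := μZp 2

instance (n : ℕ) : NeZero (2^n) := ⟨pow_ne_zero _ two_ne_zero⟩

instance : μ2.IsAddHaarMeasure := by
  unfold μ2 μZp; exact Measure.isAddHaarMeasure_addHaarMeasure ⊤

def ball (n : ℕ) (c : ZMod (2^n)) : Set ℤ_[2] := {x | PadicInt.toZModPow n x = c}

lemma mem_ball_iff {n : ℕ} {c : ZMod (2^n)} {x : ℤ_[2]} :
    x ∈ ball n c ↔ x - ((c.val : ℕ) : ℤ_[2]) ∈ Ideal.span {((2:ℕ):ℤ_[2])^n} := by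
  rw [← PadicInt.ker_toZModPow, RingHom.mem_ker, map_sub, map_natCast,
    ZMod.natCast_rightInverse c, sub_eq_zero]
  rfl

lemma ball_closed (n : ℕ) (c : ZMod (2^n)) : IsClosed (ball n c) := by
  have : ball n c = {x : ℤ_[2] | ‖x - ((c.val : ℕ) : ℤ_[2])‖ ≤ ((2:ℕ):ℝ)^(-(n:ℤ))} := by
    ext x
    rw [Set.mem_setOf_eq, mem_ball_iff]
    exact (PadicInt.norm_le_pow_iff_mem_span_pow _ n).symm
  rw [this]
  exact isClosed_le (by fun_prop) continuous_const

lemma ball_measurable (n : ℕ) (c : ZMod (2^n)) : MeasurableSet (ball n c) :=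
  (ball_closed n c).measurableSet

lemma μ2_univ : μ2 Set.univ = 1 := by
  rw [μ2, μZp, ← TopologicalSpace.PositiveCompacts.coe_top (α := ℤ_[2])]
  exact Measure.addHaarMeasure_self

instance : IsFiniteMeasure μ2 := ⟨by rw [μ2_univ]; norm_num⟩

lemma ball_translate (n : ℕ) (c : ZMod (2^n)) :
    ball n c = (fun x : ℤ_[2] => x + (-((c.val : ℕ) : ℤ_[2]))) ⁻¹' (ball n 0) := by
  ext x
  simp only [ball, Set.mem_preimage, Set.mem_setOf_eq, map_add, map_neg, map_natCast,
    ZMod.natCast_rightInverse c]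
  rw [← sub_eq_add_neg, sub_eq_zero]

lemma μ2_ball_eq (n : ℕ) (c : ZMod (2^n)) : μ2 (ball n c) = μ2 (ball n 0) := by
  rw [ball_translate]
  exact measure_preimage_add_right μ2 _ _

lemma ball_disjoint {n : ℕ} {c d : ZMod (2^n)} (h : c ≠ d) :
    Disjoint (ball n c) (ball n d) := by
  rw [Set.disjoint_left]
  rintro x hc hd
  exact h (hc.symm.trans hd)

lemma μ2_ball (n : ℕ) (c : ZMod (2^n)) : μ2 (ball n c) = ((2:ℝ≥0∞)^n)⁻¹ := by
  have hU : (⋃ d : ZMod (2^n), ball n d) = Set.univ := by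
    ext x
    simp only [Set.mem_iUnion, Set.mem_univ, iff_true]
    exact ⟨toZModPow n x, rfl⟩
  have h1 : (2:ℝ≥0∞)^n * μ2 (ball n 0) = 1 := by
    have := measure_iUnion (μ := μ2) (f := fun d : ZMod (2^n) => ball n d)
      (fun c d hcd => ball_disjoint hcd) (fun d => ball_measurable n d)
    rw [hU, μ2_univ] at this
    rw [this, tsum_fintype]
    simp only [μ2_ball_eq]
    rw [Finset.sum_const, Finset.card_univ, ZMod.card (2^n), nsmul_eq_mul]
    push_cast
    ring
  rw [μ2_ball_eq n c]
  have h2 : ((2:ℝ≥0∞)^n) ≠ 0 := by positivity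
  have h3 : ((2:ℝ≥0∞)^n) ≠ ⊤ := ENNReal.pow_ne_top (by norm_num)
  calc μ2 (ball n 0) = ((2:ℝ≥0∞)^n)⁻¹ * ((2:ℝ≥0∞)^n * μ2 (ball n 0)) := by
        rw [← mul_assoc, ENNReal.inv_mul_cancel h2 h3, one_mul]
    _ = ((2:ℝ≥0∞)^n)⁻¹ := by rw [h1, mul_one]

/-! ### Squares in ℤ₂ -/

lemma congr_iff {m : ℕ} {a b : ℤ_[2]} :
    PadicInt.toZModPow m a = PadicInt.toZModPow m b ↔ ∃ t, a - b = 2^m * t := by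
  rw [← sub_eq_zero, ← map_sub, ← RingHom.mem_ker, PadicInt.ker_toZModPow,
    Ideal.mem_span_singleton]
  constructor
  · rintro ⟨t, ht⟩; exact ⟨t, by push_cast at ht ⊢; linear_combination ht⟩
  · rintro ⟨t, ht⟩; exact ⟨t, by push_cast at ht ⊢; linear_combination ht⟩

lemma himg (m j : ℕ) : PadicInt.toZModPow m ((2:ℤ_[2])^j) = 2^j := by
  rw [map_pow, map_ofNat]

lemma norm_two : ‖(2:ℤ_[2])‖ = 2⁻¹ := by
  rw [show (2:ℤ_[2]) = ((2:ℕ):ℤ_[2]) by norm_cast, PadicInt.norm_p]; norm_num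

lemma sq_of_mod8 {u : ℤ_[2]} (h : PadicInt.toZModPow 3 u = 1) : IsSquare u := by
  obtain ⟨t, ht⟩ : ∃ t, u - 1 = 2^3 * t := by
    rw [← congr_iff, map_one]; exact h
  have hnorm : ‖u - 1‖ ≤ (8:ℝ)⁻¹ := by
    rw [ht, norm_mul, norm_pow, norm_two]
    calc (2:ℝ)⁻¹^3 * ‖t‖ ≤ 2⁻¹^3 * 1 := by gcongr; exact t.norm_le_one
      _ = (8:ℝ)⁻¹ := by norm_num
  have key : ‖(X^2 - C u).eval 1‖ < ‖(X^2 - C u).derivative.eval 1‖^2 := by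
    have h1 : (X^2 - C u).eval 1 = 1 - u := by simp
    have h2 : (X^2 - C u).derivative.eval 1 = 2 := by
      simp [derivative_pow]
    rw [h1, h2, norm_sub_rev, norm_two]
    refine lt_of_le_of_lt hnorm ?_
    norm_num
  obtain ⟨z, hz, -⟩ := hensels_lemma key
  rw [Polynomial.coe_aeval_eq_eval, Polynomial.eval_sub, Polynomial.eval_pow, Polynomial.eval_X, Polynomial.eval_C,
    sub_eq_zero] at hz
  exact ⟨z, by rw [← hz, sq]⟩

lemma units_sq : ∀ v : (ZMod (2^3))ˣ, v^2 = 1 := by decide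

lemma isSquare_iff (x : ℤ_[2]) :
    IsSquare x ↔ x = 0 ∨ ∃ k : ℕ, PadicInt.toZModPow (2*k+3) x = 2^(2*k) := by
  constructor
  · rintro ⟨y, rfl⟩
    rcases eq_or_ne y 0 with rfl | hy
    · left; ring
    · right
      refine ⟨y.valuation, ?_⟩
      have hspec : y = (PadicInt.unitCoeff hy : ℤ_[2]) * 2 ^ y.valuation := by
        have := PadicInt.unitCoeff_spec hy
        push_cast at this ⊢
        exact this
      have hw2 : PadicInt.toZModPow 3
          ((PadicInt.unitCoeff hy : ℤ_[2]) * (PadicInt.unitCoeff hy : ℤ_[2])) = 1 := by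
        have h' := congrArg Units.val
          (units_sq (Units.map (PadicInt.toZModPow 3).toMonoidHom (PadicInt.unitCoeff hy)))
        simpa [sq, ← map_mul] using h'
      obtain ⟨t, ht⟩ : ∃ t, (PadicInt.unitCoeff hy : ℤ_[2]) * (PadicInt.unitCoeff hy : ℤ_[2]) - 1
          = 2^3 * t := by
        rw [← congr_iff, map_one]; exact hw2
      rw [← himg (2*(y.valuation)+3) (2*(y.valuation)), congr_iff]
      refine ⟨t, ?_⟩
      linear_combination (y + (PadicInt.unitCoeff hy : ℤ_[2]) * 2 ^ y.valuation) * hspec + (2:ℤ_[2])^(2*(y.valuation)) * ht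
  · rintro (rfl | ⟨k, hk⟩)
    · exact ⟨0, by ring⟩
    · obtain ⟨t, ht⟩ : ∃ t, x - 2^(2*k) = 2^(2*k+3) * t := by
        rw [← congr_iff, himg]; exact hk
      have hu : IsSquare (1 + 2^3 * t) := by
        apply sq_of_mod8
        rw [map_add, map_one, map_mul, himg, show ((2:ZMod (2^3))^3) = 0 by decide,
          zero_mul, add_zero]
      obtain ⟨z, hz⟩ := hu
      exact ⟨2^k * z, by linear_combination ht + (2:ℤ_[2])^(2*k) * hz⟩

/-! ### Counting -/

lemma count_unit (m : ℕ) (c : ZMod (2^m)) (hc : IsUnit c) :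
    (Finset.univ.filter (fun p : ZMod (2^m) × ZMod (2^m) => p.1 * p.2 = c)).card
      = Nat.totient (2^m) := by
  rw [← ZMod.card_units_eq_totient, ← Finset.card_univ]
  apply Finset.card_bij (i := fun (p : ZMod (2^m) × ZMod (2^m))
    (hp : p ∈ Finset.univ.filter (fun p : ZMod (2^m) × ZMod (2^m) => p.1 * p.2 = c)) =>
      (isUnit_of_mul_isUnit_left (by
        rw [(Finset.mem_filter.mp hp).2]; exact hc)).unit)
  · intro a ha; exact Finset.mem_univ _
  · intro a ha b hb hab
    have h1 : a.1 = b.1 := by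
      have := congrArg Units.val hab
      simpa using this
    have ha' := (Finset.mem_filter.mp ha).2
    have hb' := (Finset.mem_filter.mp hb).2
    have hu : IsUnit a.1 := isUnit_of_mul_isUnit_left (by rw [ha']; exact hc)
    have h2 : a.2 = b.2 := by
      have : a.1 * a.2 = a.1 * b.2 := by rw [ha', h1, hb']
      exact hu.mul_left_cancel this
    exact Prod.ext h1 h2
  · intro u _
    refine ⟨((u : ZMod (2^m)), (u⁻¹ : (ZMod (2^m))ˣ) * c), Finset.mem_filter.mpr
      ⟨Finset.mem_univ _, by rw [← mul_assoc]; norm_cast; rw [u.mul_inv]; simp⟩, ?_⟩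
    apply Units.ext
    simp

lemma count0 :
    (Finset.univ.filter (fun p : ZMod (2^3) × ZMod (2^3) => p.1 * p.2 = 0)).card = 20 := by
  decide

/-! ### Cell measure -/

lemma cell (m : ℕ) (c : ZMod (2^m)) :
    (μ2.prod μ2) {x : ℤ_[2] × ℤ_[2] | PadicInt.toZModPow m (x.1 * x.2) = c}
      = ((Finset.univ.filter (fun p : ZMod (2^m) × ZMod (2^m) => p.1 * p.2 = c)).card : ℝ≥0∞)
        * (((2:ℝ≥0∞)^m)⁻¹ * ((2:ℝ≥0∞)^m)⁻¹) := by
  set F := Finset.univ.filter (fun p : ZMod (2^m) × ZMod (2^m) => p.1 * p.2 = c) with hF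
  have hset : {x : ℤ_[2] × ℤ_[2] | PadicInt.toZModPow m (x.1 * x.2) = c}
      = ⋃ p ∈ F, (ball m p.1 ×ˢ ball m p.2) := by
    ext x
    simp only [Set.mem_setOf_eq, Set.mem_iUnion, hF, Finset.mem_filter, Finset.mem_univ,
      true_and, Set.mem_prod, map_mul]
    constructor
    · intro h; exact ⟨(toZModPow m x.1, toZModPow m x.2), h, rfl, rfl⟩
    · rintro ⟨p, hp, h1, h2⟩
      rw [ball, Set.mem_setOf_eq] at h1 h2
      rw [h1, h2]; exact hp
  have hdisj : Set.PairwiseDisjoint (↑F) (fun p : ZMod (2^m) × ZMod (2^m) =>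
      ball m p.1 ×ˢ ball m p.2) := by
    intro p hp q hq hpq
    rw [Function.onFun, Set.disjoint_left]
    rintro ⟨a, b⟩ ⟨h1, h2⟩ ⟨h3, h4⟩
    exact hpq (Prod.ext (h1.symm.trans h3) (h2.symm.trans h4))
  have hmeas : ∀ p ∈ F, MeasurableSet (ball m p.1 ×ˢ ball m p.2 : Set (ℤ_[2] × ℤ_[2])) :=
    fun p _ => (ball_measurable m p.1).prod (ball_measurable m p.2)
  rw [hset, measure_biUnion_finset hdisj hmeas]
  have hterm : ∀ p : ZMod (2^m) × ZMod (2^m),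
      (μ2.prod μ2) (ball m p.1 ×ˢ ball m p.2) = ((2:ℝ≥0∞)^m)⁻¹ * ((2:ℝ≥0∞)^m)⁻¹ :=
    fun p => by rw [Measure.prod_prod, μ2_ball, μ2_ball]
  rw [Finset.sum_congr rfl (fun p _ => hterm p), Finset.sum_const, nsmul_eq_mul]

/-! ### The sets T k -/

def T (k : ℕ) : Set (ℤ_[2] × ℤ_[2]) :=
  {x | PadicInt.toZModPow (2*k+3) (x.1 * x.2) = 2^(2*k) - 1}

lemma T_meas (k : ℕ) : MeasurableSet (T k) := by
  have := cell (2*k+3) (2^(2*k) - 1)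
  -- measurability from the set identity used in `cell`; redo directly:
  have hset : T k
      = ⋃ p ∈ (Finset.univ.filter (fun p : ZMod (2^(2*k+3)) × ZMod (2^(2*k+3)) =>
          p.1 * p.2 = 2^(2*k) - 1)), (ball (2*k+3) p.1 ×ˢ ball (2*k+3) p.2) := by
    ext x
    simp only [T, Set.mem_setOf_eq, Set.mem_iUnion, Finset.mem_filter, Finset.mem_univ,
      true_and, Set.mem_prod, map_mul]
    constructor
    · intro h; exact ⟨(toZModPow (2*k+3) x.1, toZModPow (2*k+3) x.2), h, rfl, rfl⟩
    · rintro ⟨p, hp, h1, h2⟩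
      rw [ball, Set.mem_setOf_eq] at h1 h2
      rw [h1, h2]; exact hp
  rw [hset]
  exact (Finset.univ.filter _).measurableSet_biUnion
    (fun p _ => (ball_measurable _ p.1).prod (ball_measurable _ p.2))

lemma pow_two_ne {k l : ℕ} (hkl : k < l) :
    ((2:ZMod (2^(2*k+3)))^(2*l)) ≠ 2^(2*k) := by
  intro h
  have h' : (((2^(2*l) : ℕ)) : ZMod (2^(2*k+3))) = ((2^(2*k) : ℕ) : ZMod (2^(2*k+3))) := by
    push_cast
    exact h
  rw [ZMod.natCast_eq_natCast_iff] at h'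
  have hdvd : ((2^(2*k+3) : ℕ) : ℤ) ∣ ((2^(2*k) : ℕ) : ℤ) - ((2^(2*l) : ℕ) : ℤ) := h'.dvd
  push_cast at hdvd
  have heq : (2:ℤ)^(2*k) - 2^(2*l) = 2^(2*k) * (1 - 2^(2*(l-k))) := by
    rw [mul_sub, mul_one, ← pow_add]
    congr 2
    omega
  rw [heq, show (2:ℤ)^(2*k+3) = 2^(2*k) * 2^3 by rw [← pow_add]] at hdvd
  have h8 : (2:ℤ)^3 ∣ 1 - 2^(2*(l-k)) :=
    (mul_dvd_mul_iff_left (a := (2:ℤ)^(2*k)) (by positivity)).mp hdvd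
  have h2 : (2:ℤ) ∣ 1 - 2^(2*(l-k)) := dvd_trans (by norm_num) h8
  have h2' : (2:ℤ) ∣ 2^(2*(l-k)) := dvd_pow_self 2 (by omega)
  have : (2:ℤ) ∣ 1 := by
    have := dvd_add h2 h2'
    simpa using this
  norm_num at this

lemma T_disj : Pairwise (Function.onFun Disjoint T) := by
  intro k l hkl
  wlog h : k < l generalizing k l
  · exact (this hkl.symm (by omega)).symm
  rw [Function.onFun, Set.disjoint_left]
  intro x hk hl
  rw [T, Set.mem_setOf_eq] at hk hl
  have hcast := PadicInt.zmod_cast_comp_toZModPow (p := 2) (2*k+3) (2*l+3) (by omega)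
  have : (ZMod.castHom (pow_dvd_pow 2 (by omega : 2*k+3 ≤ 2*l+3)) (ZMod (2^(2*k+3))))
      (PadicInt.toZModPow (2*l+3) (x.1 * x.2)) = PadicInt.toZModPow (2*k+3) (x.1 * x.2) := by
    rw [← RingHom.comp_apply, hcast]
  rw [hl, hk, map_sub, map_pow, map_one, map_ofNat] at this
  have h4 : ((2:ZMod (2^(2*k+3)))^(2*l)) = 2^(2*k) := by
    have h1 : ((2:ZMod (2^(2*k+3)))^(2*l)) - 1 = 2^(2*k) - 1 := this
    linear_combination h1
  exact pow_two_ne h h4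

lemma term_eq (k : ℕ) :
    (2:ℝ≥0∞)^(2*k+4) * (((2:ℝ≥0∞)^(2*(k+1)+3))⁻¹ * ((2:ℝ≥0∞)^(2*(k+1)+3))⁻¹)
      = ((2:ℝ≥0∞)⁻¹^2)^k * (2:ℝ≥0∞)⁻¹^6 := by
  rw [ENNReal.inv_pow]
  have h1 : (2:ℝ≥0∞)^(2*k+4) * ((2:ℝ≥0∞)⁻¹^(2*(k+1)+3) * (2:ℝ≥0∞)⁻¹^(2*(k+1)+3))
      = ((2:ℝ≥0∞) * 2⁻¹)^(2*k+4) * (((2:ℝ≥0∞)⁻¹^2)^k * (2:ℝ≥0∞)⁻¹^6) := by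
    rw [mul_pow]
    ring
  rw [h1, ENNReal.mul_inv_cancel (by norm_num) (by norm_num), one_pow, one_mul]

lemma hT0 : (μ2.prod μ2) (T 0) = 20 * (((2:ℝ≥0∞)^(2*0+3))⁻¹ * ((2:ℝ≥0∞)^(2*0+3))⁻¹) := by
  have h := cell (2*0+3) ((2:ZMod (2^(2*0+3)))^(2*0) - 1)
  have hc : ((2:ZMod (2^(2*0+3)))^(2*0) - 1) = 0 := by decide
  rw [hc] at h
  have h20 : ((Finset.univ.filter
      (fun p : ZMod (2^(2*0+3)) × ZMod (2^(2*0+3)) => p.1 * p.2 = 0)).card) = 20 := count0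
  rw [T, hc, h, h20]
  norm_num

lemma hTk (k : ℕ) : (μ2.prod μ2) (T (k+1))
    = (2:ℝ≥0∞)^(2*k+4) * (((2:ℝ≥0∞)^(2*(k+1)+3))⁻¹ * ((2:ℝ≥0∞)^(2*(k+1)+3))⁻¹) := by
  have h := cell (2*(k+1)+3) ((2:ZMod (2^(2*(k+1)+3)))^(2*(k+1)) - 1)
  have hc : ((2:ZMod (2^(2*(k+1)+3)))^(2*(k+1)) - 1)
      = (((2^(2*(k+1)) - 1 : ℕ)) : ZMod (2^(2*(k+1)+3))) := by
    push_cast [Nat.one_le_two_pow]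
    ring
  have hunit : IsUnit ((2:ZMod (2^(2*(k+1)+3)))^(2*(k+1)) - 1) := by
    rw [hc, ZMod.isUnit_iff_coprime]
    refine Nat.Coprime.pow_right _ ?_
    rw [Nat.coprime_two_right]
    refine Nat.Even.sub_odd Nat.one_le_two_pow ?_ odd_one
    exact (Nat.even_pow' (by omega)).mpr even_two
  have hcard := count_unit (2*(k+1)+3) _ hunit
  have htot : Nat.totient (2^(2*(k+1)+3)) = 2^(2*k+4) := by
    rw [Nat.totient_prime_pow Nat.prime_two (by omega)]
    norm_num
    ring_nf
  rw [T, h, hcard, htot]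
  push_cast
  ring

lemma hA : (μ2.prod μ2) {x : ℤ_[2] × ℤ_[2] | x.1 * x.2 + 1 = 0} = 0 := by
  have hbound : ∀ n : ℕ, (μ2.prod μ2) {x : ℤ_[2] × ℤ_[2] | x.1 * x.2 + 1 = 0}
      ≤ (2:ℝ≥0∞)⁻¹^n := by
    intro n
    have hsub : {x : ℤ_[2] × ℤ_[2] | x.1 * x.2 + 1 = 0}
        ⊆ {x : ℤ_[2] × ℤ_[2] | PadicInt.toZModPow (n+1) (x.1 * x.2) = -1} := by
      intro x hx
      rw [Set.mem_setOf_eq] at hx ⊢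
      have : x.1 * x.2 = -1 := by linear_combination hx
      rw [this, map_neg, map_one]
    refine le_trans (measure_mono hsub) ?_
    rw [cell (n+1) (-1)]
    have hunit : IsUnit (-1 : ZMod (2^(n+1))) := IsUnit.neg isUnit_one
    rw [count_unit (n+1) _ hunit, Nat.totient_prime_pow Nat.prime_two (by omega)]
    have hval : ((2^(n+1-1) * (2-1) : ℕ) : ℝ≥0∞) = 2^n := by push_cast; norm_num
    rw [hval, ENNReal.inv_pow]
    have h1 : (2:ℝ≥0∞)^n * ((2:ℝ≥0∞)⁻¹^(n+1) * (2:ℝ≥0∞)⁻¹^(n+1))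
        = ((2:ℝ≥0∞) * 2⁻¹)^n * (2:ℝ≥0∞)⁻¹^(n+2) := by
      rw [mul_pow]; ring
    rw [h1, ENNReal.mul_inv_cancel (by norm_num) (by norm_num), one_pow, one_mul]
    exact pow_le_pow_of_le_one zero_le (ENNReal.inv_le_one.mpr (by norm_num)) (by omega)
  refine le_antisymm ?_ zero_le
  exact ge_of_tendsto'
    (ENNReal.tendsto_pow_atTop_nhds_zero_of_lt_one
      (by rw [ENNReal.inv_lt_one]; norm_num : (2:ℝ≥0∞)⁻¹ < 1))
    hbound

end SqAux

set_option maxHeartbeats 1000000 in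
open scoped ENNReal in
theorem stmt0 :
    ((μZp 2).prod (μZp 2)) {x : ℤ_[2] × ℤ_[2] | IsSquare (x.1 * x.2 + 1)} = 1/3 := by
  show (SqAux.μ2.prod SqAux.μ2) _ = 1/3
  have hset : {x : ℤ_[2] × ℤ_[2] | IsSquare (x.1 * x.2 + 1)}
      = {x : ℤ_[2] × ℤ_[2] | x.1 * x.2 + 1 = 0} ∪ ⋃ k, SqAux.T k := by
    ext x
    simp only [Set.mem_setOf_eq, Set.mem_union, Set.mem_iUnion, SqAux.isSquare_iff, SqAux.T]
    refine or_congr Iff.rfl (exists_congr fun k => ?_)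
    rw [map_add, map_one, ← eq_sub_iff_add_eq]
  rw [hset]
  have hunion : (SqAux.μ2.prod SqAux.μ2)
      ({x : ℤ_[2] × ℤ_[2] | x.1 * x.2 + 1 = 0} ∪ ⋃ k, SqAux.T k)
      = (SqAux.μ2.prod SqAux.μ2) (⋃ k, SqAux.T k) := by
    refine le_antisymm (le_trans (measure_union_le _ _) ?_)
      (measure_mono Set.subset_union_right)
    rw [SqAux.hA, zero_add]
  rw [hunion, measure_iUnion SqAux.T_disj SqAux.T_meas]
  rw [tsum_eq_zero_add' (f := fun k : ℕ => (SqAux.μ2.prod SqAux.μ2) (SqAux.T k)) ENNReal.summable]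
  have hterm : ∀ k : ℕ, (SqAux.μ2.prod SqAux.μ2) (SqAux.T (k+1))
      = ((2:ℝ≥0∞)⁻¹^2)^k * (2:ℝ≥0∞)⁻¹^6 := fun k => by
    rw [SqAux.hTk k, SqAux.term_eq k]
  rw [tsum_congr hterm, ENNReal.tsum_mul_right, ENNReal.tsum_geometric, SqAux.hT0]
  have h34 : (1:ℝ≥0∞) - (2⁻¹)^2 = 3/4 := by
    rw [← ENNReal.toReal_eq_toReal_iff' (by finiteness)
      ((ENNReal.div_lt_top (by norm_num) (by norm_num)).ne)]
    rw [ENNReal.toReal_sub_of_le (by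
      calc ((2:ℝ≥0∞)⁻¹)^2 ≤ 1^2 := by gcongr; exact ENNReal.inv_le_one.mpr (by norm_num)
        _ = 1 := one_pow 2) (by finiteness)]
    rw [ENNReal.toReal_div]
    simp [ENNReal.toReal_inv]
    norm_num
  rw [h34]
  rw [← ENNReal.toReal_eq_toReal_iff' (by
      refine ENNReal.add_ne_top.mpr ⟨?_, ?_⟩
      · finiteness
      · exact ENNReal.mul_ne_top (ENNReal.inv_ne_top.mpr (by norm_num))
          (ENNReal.pow_ne_top (by finiteness)))
    ((ENNReal.div_lt_top (by norm_num) (by norm_num)).ne)]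
  rw [ENNReal.toReal_add (by finiteness)
    (ENNReal.mul_ne_top (ENNReal.inv_ne_top.mpr (by norm_num))
      (ENNReal.pow_ne_top (by finiteness)))]
  simp [ENNReal.toReal_inv, ENNReal.toReal_div]
  norm_num
end

section
/- Let p be an odd prime and r ∈ ℤ_p with Legendre symbol (r/p) = -1. Then the Haar measure of the set of pairs (a,b) ∈ ℤ_p² with ab + r a square in ℤ_p equals 1/2 - 1/(p+1). -/
open MeasureTheory

namespace Stmt3Aux
open ENNReal

variable {p : ℕ} [Fact p.Prime]

instance : (μZp p).IsAddHaarMeasure := Measure.isAddHaarMeasure_addHaarMeasure ⊤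

lemma μZp_univ : μZp p Set.univ = 1 := by
  have h := Measure.addHaarMeasure_self (K₀ := (⊤ : TopologicalSpace.PositiveCompacts ℤ_[p]))
  simpa [μZp] using h

instance : IsFiniteMeasure (μZp p) := ⟨by rw [μZp_univ]; exact ENNReal.one_lt_top⟩

lemma eq_smul_μZp (ν : Measure ℤ_[p]) [SigmaFinite ν] [ν.IsAddLeftInvariant] :
    ν = ν Set.univ • μZp p := by
  have h := Measure.addHaarMeasure_unique ν (⊤ : TopologicalSpace.PositiveCompacts ℤ_[p])
  simpa [μZp] using h

/-- pushforward of μZp under a continuous additive automorphism is μZp -/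
lemma map_addEquiv (e : ℤ_[p] ≃+ ℤ_[p]) (he : Continuous (e : ℤ_[p] → ℤ_[p])) :
    (μZp p).map e = μZp p := by
  have hme : Measurable (e : ℤ_[p] → ℤ_[p]) := he.measurable
  have h1 : ((μZp p).map e).IsAddLeftInvariant :=
    MeasureTheory.isAddLeftInvariant_map ⟨(e : ℤ_[p] → ℤ_[p]), fun a b => e.map_add a b⟩
      hme e.surjective
  have h2 : IsFiniteMeasure ((μZp p).map e) := by
    constructor
    rw [Measure.map_apply hme MeasurableSet.univ]
    exact measure_lt_top _ _
  have h3 := eq_smul_μZp ((μZp p).map e)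
  rw [Measure.map_apply hme MeasurableSet.univ] at h3
  simpa [μZp_univ] using h3

noncomputable def mulUnitEquiv (u : ℤ_[p]ˣ) : ℤ_[p] ≃+ ℤ_[p] where
  toFun x := u * x
  invFun x := ↑u⁻¹ * x
  left_inv x := by
    show ↑u⁻¹ * (↑u * x) = x
    rw [← mul_assoc, ← Units.val_mul]; simp
  right_inv x := by
    show ↑u * (↑u⁻¹ * x) = x
    rw [← mul_assoc, ← Units.val_mul]; simp
  map_add' x y := mul_add _ _ _

lemma measure_preimage_unit_mul (u : ℤ_[p]ˣ) {s : Set ℤ_[p]} (hs : MeasurableSet s) :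
    μZp p ((fun x => (u : ℤ_[p]) * x) ⁻¹' s) = μZp p s := by
  have he : Continuous ((mulUnitEquiv u : ℤ_[p] ≃+ ℤ_[p]) : ℤ_[p] → ℤ_[p]) :=
    continuous_const.mul continuous_id
  have := map_addEquiv (mulUnitEquiv u) he
  calc μZp p ((fun x => (u : ℤ_[p]) * x) ⁻¹' s)
      = (μZp p).map (mulUnitEquiv u) s := (Measure.map_apply he.measurable hs).symm
    _ = μZp p s := by rw [this]

lemma toZMod_eq_iff (x : ℤ_[p]) (z : ZMod p) :
    PadicInt.toZMod x = z ↔ ‖x - ((z.val : ℕ) : ℤ_[p])‖ < 1 := by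
  have hc : PadicInt.toZMod ((z.val : ℕ) : ℤ_[p]) = z := by
    rw [map_natCast]
    simp [ZMod.natCast_val, ZMod.cast_id]
  have hker : x - ((z.val : ℕ) : ℤ_[p]) ∈ RingHom.ker (PadicInt.toZMod (p := p)) ↔
      ‖x - ((z.val : ℕ) : ℤ_[p])‖ < 1 := by
    rw [PadicInt.ker_toZMod, IsLocalRing.mem_maximalIdeal, PadicInt.mem_nonunits]
  rw [← hker, RingHom.mem_ker, map_sub, hc, sub_eq_zero]

def fiber (z : ZMod p) : Set ℤ_[p] := (PadicInt.toZMod (p := p)) ⁻¹' {z}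

lemma fiber_eq_ball (z : ZMod p) :
    fiber z = {x : ℤ_[p] | ‖x - ((z.val : ℕ) : ℤ_[p])‖ < 1} := by
  ext x; exact toZMod_eq_iff x z

lemma measurableSet_fiber (z : ZMod p) : MeasurableSet (fiber z) := by
  rw [fiber_eq_ball]
  have : IsOpen {x : ℤ_[p] | ‖x - ((z.val : ℕ) : ℤ_[p])‖ < 1} :=
    isOpen_lt (by fun_prop) continuous_const
  exact this.measurableSet

lemma measure_fiber (z : ZMod p) : μZp p (fiber z) = (p : ℝ≥0∞)⁻¹ := by
  classical
  -- all fibers have the same measure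
  have htrans : ∀ w : ZMod p, μZp p (fiber w) = μZp p (fiber 0) := by
    intro w
    have hc : PadicInt.toZMod ((w.val : ℕ) : ℤ_[p]) = w := by
      rw [map_natCast]; simp [ZMod.natCast_val, ZMod.cast_id]
    have hset : fiber w = (fun x => (-((w.val : ℕ) : ℤ_[p])) + x) ⁻¹' (fiber 0) := by
      ext x
      simp only [fiber, Set.mem_preimage, Set.mem_singleton_iff, map_add, map_neg, hc]
      rw [neg_add_eq_zero]
      exact eq_comm
    rw [hset, measure_preimage_add]
  have hcover : (⋃ z : ZMod p, fiber z) = Set.univ := by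
    ext x; simp [fiber]
  have hdisj : Pairwise (Function.onFun Disjoint (fun z : ZMod p => fiber z)) := by
    intro a b hab
    refine Set.disjoint_left.mpr ?_
    intro x hxa hxb
    exact hab (hxa.symm.trans hxb)
  have hsum : ∑' z : ZMod p, μZp p (fiber z) = 1 := by
    rw [← measure_iUnion hdisj (fun z => measurableSet_fiber z), hcover, μZp_univ]
  have : (p : ℝ≥0∞) * μZp p (fiber 0) = 1 := by
    rw [tsum_fintype] at hsum
    calc (p : ℝ≥0∞) * μZp p (fiber 0)
        = ∑ z : ZMod p, μZp p (fiber 0) := by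
          rw [Finset.sum_const, nsmul_eq_mul]
          congr 1
          simp [ZMod.card]
      _ = ∑ z : ZMod p, μZp p (fiber z) := by
          exact Finset.sum_congr rfl fun z _ => (htrans z).symm
      _ = 1 := hsum
  have hp0 : (p : ℝ≥0∞) ≠ 0 := by
    simp [Nat.Prime.ne_zero (Fact.out : p.Prime)]
  have hptop : (p : ℝ≥0∞) ≠ ⊤ := ENNReal.natCast_ne_top p
  calc μZp p (fiber z) = μZp p (fiber 0) := htrans z
    _ = ((p : ℝ≥0∞)⁻¹ * (p : ℝ≥0∞)) * μZp p (fiber 0) := by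
        rw [ENNReal.inv_mul_cancel hp0 hptop, one_mul]
    _ = (p : ℝ≥0∞)⁻¹ * ((p : ℝ≥0∞) * μZp p (fiber 0)) := mul_assoc _ _ _
    _ = (p : ℝ≥0∞)⁻¹ := by rw [this, mul_one]


noncomputable def pmul : ℤ_[p] → ℤ_[p] := fun x => (p : ℤ_[p]) * x

lemma p_ne_zero : (p : ℤ_[p]) ≠ 0 := by
  intro h0
  have hn := PadicInt.norm_p (p := p)
  rw [h0, norm_zero] at hn
  have hp1 : (1:ℝ) < p := by exact_mod_cast (Fact.out : p.Prime).one_lt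
  have : (0:ℝ) < (p:ℝ)⁻¹ := by positivity
  rw [← hn] at this
  exact lt_irrefl _ this

lemma pmul_isClosedEmbedding : Topology.IsClosedEmbedding (pmul (p := p)) := by
  have hc : Continuous (pmul (p := p)) := continuous_const.mul continuous_id
  have hinj : Function.Injective (pmul (p := p)) := fun a b hab =>
    mul_left_cancel₀ p_ne_zero hab
  exact hc.isClosedEmbedding hinj

lemma range_pmul : Set.range (pmul (p := p)) = fiber 0 := by
  ext x
  rw [fiber_eq_ball]
  simp only [Set.mem_range, Set.mem_setOf_eq, ZMod.val_zero, Nat.cast_zero, sub_zero]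
  rw [PadicInt.norm_lt_one_iff_dvd]
  constructor
  · rintro ⟨y, rfl⟩; exact ⟨y, rfl⟩
  · rintro ⟨y, rfl⟩; exact ⟨y, rfl⟩

lemma measure_pmul_image {A : Set ℤ_[p]} (hA : MeasurableSet A) :
    μZp p (pmul '' A) = (p : ℝ≥0∞)⁻¹ * μZp p A := by
  have hemb : MeasurableEmbedding (pmul (p := p)) :=
    pmul_isClosedEmbedding.measurableEmbedding
  set ν : Measure ℤ_[p] := (μZp p).comap pmul with hν
  have hνap : ∀ s : Set ℤ_[p], ν s = μZp p (pmul '' s) := fun s => hemb.comap_apply _ _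
  have hfin : IsFiniteMeasure ν := ⟨by rw [hνap]; exact measure_lt_top _ _⟩
  have hinv : ν.IsAddLeftInvariant := by
    constructor
    intro a
    refine Measure.ext fun s hs => ?_
    rw [Measure.map_apply (measurable_const_add a) hs, hνap, hνap]
    have himg : pmul '' ((fun x => a + x) ⁻¹' s) =
        (fun y => pmul a + y) ⁻¹' (pmul '' s) := by
      ext y
      constructor
      · rintro ⟨x, hx, rfl⟩
        exact ⟨a + x, hx, by simp [pmul, mul_add]⟩
      · rintro ⟨w, hw, hwy⟩
        refine ⟨w - a, by simpa using hw, ?_⟩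
        have : pmul (w - a) = pmul w - pmul a := by simp [pmul, mul_sub]
        rw [this, hwy]; ring
    rw [himg, measure_preimage_add]
  have huniq := eq_smul_μZp ν
  have hA2 : μZp p (pmul '' A) = ν A := (hνap A).symm
  have hunivν : ν Set.univ = (p : ℝ≥0∞)⁻¹ := by
    rw [hνap, Set.image_univ, range_pmul, measure_fiber]
  rw [hA2, huniq, hunivν, Measure.smul_apply, smul_eq_mul]

lemma toZMod_ne_zero_iff_norm (x : ℤ_[p]) : PadicInt.toZMod x ≠ 0 ↔ ‖x‖ = 1 := by
  have h0 : PadicInt.toZMod x = 0 ↔ ‖x‖ < 1 := by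
    rw [toZMod_eq_iff]
    simp
  constructor
  · intro h
    exact le_antisymm (PadicInt.norm_le_one x) (not_lt.mp (fun hlt => h (h0.mpr hlt)))
  · intro h hc
    rw [h0, h] at hc
    exact lt_irrefl _ hc

def U : Set ℤ_[p] := {x | PadicInt.toZMod x ≠ 0}

lemma U_eq_compl : (U : Set ℤ_[p]) = (fiber 0)ᶜ := by
  ext x; simp [U, fiber]

lemma measurableSet_U : MeasurableSet (U (p := p)) := by
  rw [U_eq_compl]; exact (measurableSet_fiber 0).compl

lemma measure_U : μZp p U = 1 - (p : ℝ≥0∞)⁻¹ := by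
  rw [U_eq_compl, measure_compl (measurableSet_fiber 0) (measure_ne_top _ _),
    μZp_univ, measure_fiber]

lemma isSquare_toZMod {x : ℤ_[p]} (h : IsSquare x) : IsSquare (PadicInt.toZMod x) := by
  obtain ⟨y, rfl⟩ := h
  exact ⟨PadicInt.toZMod y, (map_mul _ _ _)⟩

lemma toZMod_eq_zero_iff (x : ℤ_[p]) : PadicInt.toZMod x = 0 ↔ ‖x‖ < 1 := by
  rw [toZMod_eq_iff]; simp

lemma isSquare_of_isSquare_toZMod (hp2 : p ≠ 2) {u : ℤ_[p]} (hu : ‖u‖ = 1)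
    (h : IsSquare (PadicInt.toZMod u)) : IsSquare u := by
  obtain ⟨s, hs⟩ := h
  have hu0 : PadicInt.toZMod u ≠ 0 := (toZMod_ne_zero_iff_norm u).mpr hu
  have hs0 : s ≠ 0 := fun h0 => hu0 (by rw [hs, h0, mul_zero])
  set a : ℤ_[p] := ((s.val : ℕ) : ℤ_[p]) with ha_def
  have ha : PadicInt.toZMod a = s := by
    rw [ha_def, map_natCast]; simp [ZMod.natCast_val, ZMod.cast_id]
  have ha1 : ‖a‖ = 1 := (toZMod_ne_zero_iff_norm a).mp (by rw [ha]; exact hs0)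
  have h2 : ‖(2 : ℤ_[p])‖ = 1 := by
    apply (toZMod_ne_zero_iff_norm _).mp
    have : PadicInt.toZMod (2 : ℤ_[p]) = ((2:ℕ) : ZMod p) := by
      rw [show ((2:ℤ_[p])) = ((2:ℕ) : ℤ_[p]) by norm_num, map_natCast]
    rw [this, Ne, ZMod.natCast_eq_zero_iff]
    intro hdvd
    exact hp2 ((Nat.prime_dvd_prime_iff_eq (Fact.out : p.Prime) Nat.prime_two).mp hdvd)
  set F : Polynomial ℤ_[p] := Polynomial.X ^ 2 - Polynomial.C u with hF_def
  have hFeval : F.eval a = a * a - u := by simp [hF_def, sq]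
  have hF' : (Polynomial.derivative F).eval a = 2 * a := by
    simp [hF_def]
    exact Or.inl one_add_one_eq_two
  have heval : ‖F.eval a‖ < 1 := by
    rw [hFeval]
    apply (toZMod_eq_zero_iff _).mp
    rw [map_sub, map_mul, ha, ← hs, sub_self]
  have hlt : ‖F.eval a‖ < ‖(Polynomial.derivative F).eval a‖ ^ 2 := by
    rw [hF', norm_mul, h2, ha1]
    simpa using heval
  obtain ⟨z, hz, -, -, -⟩ := hensels_lemma hlt
  rw [hF_def] at hz
  simp only [Polynomial.coe_aeval_eq_eval, Polynomial.eval_sub, Polynomial.eval_pow, Polynomial.eval_X,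
    Polynomial.eval_C, sub_eq_zero] at hz
  exact ⟨z, by rw [← hz, sq]⟩

def T : Set ℤ_[p] := {x | IsSquare x}

lemma isClosed_T : IsClosed (T (p := p)) := by
  have hT : (T (p := p)) = Set.range (fun y : ℤ_[p] => y * y) := by
    ext x
    simp only [T, Set.mem_setOf_eq, Set.mem_range, IsSquare]
    exact ⟨fun ⟨y, hy⟩ => ⟨y, hy.symm⟩, fun ⟨y, hy⟩ => ⟨y, hy.symm⟩⟩
  rw [hT]
  exact (isCompact_range (continuous_id.mul continuous_id)).isClosed

lemma measurableSet_T : MeasurableSet (T (p := p)) := isClosed_T.measurableSet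

lemma T_diff_U : (T (p := p)) \ U = pmul '' (pmul '' T) := by
  ext x
  constructor
  · rintro ⟨hx, hxU⟩
    obtain ⟨y, rfl⟩ := hx
    have hy : ‖y‖ < 1 := by
      by_contra hy1
      have hy1' : ‖y‖ = 1 := le_antisymm (PadicInt.norm_le_one y) (not_lt.mp hy1)
      have : IsUnit (y * y) := (PadicInt.isUnit_iff.mpr hy1').mul (PadicInt.isUnit_iff.mpr hy1')
      exact hxU ((toZMod_ne_zero_iff_norm _).mpr (PadicInt.isUnit_iff.mp this))
    obtain ⟨w, rfl⟩ := (PadicInt.norm_lt_one_iff_dvd y).mp hy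
    exact ⟨(p : ℤ_[p]) * (w * w), ⟨w * w, ⟨w, rfl⟩, rfl⟩, by simp [pmul]; ring⟩
  · rintro ⟨-, ⟨t, ht, rfl⟩, rfl⟩
    constructor
    · obtain ⟨y, rfl⟩ := ht
      exact ⟨(p : ℤ_[p]) * y, by simp [pmul]; ring⟩
    · intro hU
      apply hU
      rw [toZMod_eq_zero_iff]
      rw [PadicInt.norm_lt_one_iff_dvd]
      exact ⟨pmul t, rfl⟩


lemma measurableSet_toZMod_preimage (S : Set (ZMod p)) :
    MeasurableSet ((PadicInt.toZMod (p := p)) ⁻¹' S) := by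
  have h : (PadicInt.toZMod (p := p)) ⁻¹' S = ⋃ z ∈ S, fiber z := by
    ext x
    simp [fiber, eq_comm]
  rw [h]
  exact MeasurableSet.biUnion (Set.to_countable S) fun z _ => measurableSet_fiber z

end Stmt3Aux

set_option maxHeartbeats 1000000 in
theorem stmt3 (p : ℕ) [Fact p.Prime] (hp : p ≠ 2) (r : ℤ_[p])
    (hr : ¬ IsSquare (PadicInt.toZMod r)) :
    (((μZp p).prod (μZp p)) {x : ℤ_[p] × ℤ_[p] | IsSquare (x.1 * x.2 + r)}).toReal
      = 1/2 - 1/(p+1) := by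
  classical
  have hp_prime : p.Prime := Fact.out
  have hr0 : PadicInt.toZMod r ≠ 0 := fun h => hr (by rw [h]; exact IsSquare.zero)
  have hrn : ‖r‖ = 1 := (Stmt3Aux.toZMod_ne_zero_iff_norm r).mp hr0
  have hru : IsUnit r := PadicInt.isUnit_iff.mpr hrn
  have hur_val : (hru.unit : ℤ_[p]) = r := hru.unit_spec
  set Tu : Set ℤ_[p] := (PadicInt.toZMod (p := p)) ⁻¹' {z | z ≠ 0 ∧ IsSquare z} with hTu
  set Nu : Set ℤ_[p] := (PadicInt.toZMod (p := p)) ⁻¹' {z | z ≠ 0 ∧ ¬ IsSquare z} with hNu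
  have hTum : MeasurableSet Tu := Stmt3Aux.measurableSet_toZMod_preimage _
  have hNum : MeasurableSet Nu := Stmt3Aux.measurableSet_toZMod_preimage _
  have hflip : ∀ z : ZMod p, z ≠ 0 → (IsSquare (PadicInt.toZMod r * z) ↔ ¬ IsSquare z) := by
    intro z hz
    have hχr : quadraticChar (ZMod p) (PadicInt.toZMod r) = -1 :=
      quadraticChar_neg_one_iff_not_isSquare.mpr hr
    rw [← quadraticChar_one_iff_isSquare (mul_ne_zero hr0 hz),
        ← quadraticChar_neg_one_iff_not_isSquare, map_mul, hχr]
    constructor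
    · intro h; linarith
    · intro h; rw [h]; ring
  have hNuTu : Nu = (fun x => (hru.unit : ℤ_[p]) * x) ⁻¹' Tu := by
    ext x
    simp only [hNu, hTu, Set.mem_preimage, Set.mem_setOf_eq, map_mul, hur_val]
    constructor
    · rintro ⟨hx0, hxns⟩
      exact ⟨mul_ne_zero hr0 hx0, (hflip _ hx0).mpr hxns⟩
    · rintro ⟨hx0', hxs⟩
      have hx0 : PadicInt.toZMod x ≠ 0 := fun h => hx0' (by rw [h, mul_zero])
      exact ⟨hx0, (hflip _ hx0).mp hxs⟩
  have hμNuTu : μZp p Nu = μZp p Tu := by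
    rw [hNuTu]; exact Stmt3Aux.measure_preimage_unit_mul hru.unit hTum
  have hsplit : Stmt3Aux.U (p := p) = Tu ∪ Nu := by
    ext x
    simp only [Stmt3Aux.U, hTu, hNu, Set.mem_union, Set.mem_preimage, Set.mem_setOf_eq]
    by_cases h : PadicInt.toZMod x = 0 <;> by_cases h2 : IsSquare (PadicInt.toZMod x) <;> tauto
  have hdisjTN : Disjoint Tu Nu := by
    rw [Set.disjoint_left]; rintro x ⟨h1, h2⟩ ⟨h3, h4⟩; exact h4 h2
  have hTuNu : μZp p Tu + μZp p Tu = μZp p (Stmt3Aux.U) := by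
    rw [hsplit, measure_union hdisjTN hNum, hμNuTu]
  have hTU : Stmt3Aux.T (p := p) ∩ Stmt3Aux.U = Tu := by
    ext x
    simp only [Stmt3Aux.T, Stmt3Aux.U, hTu, Set.mem_inter_iff, Set.mem_setOf_eq,
      Set.mem_preimage]
    constructor
    · rintro ⟨hsq, hx0⟩; exact ⟨hx0, Stmt3Aux.isSquare_toZMod hsq⟩
    · rintro ⟨hx0, hsq⟩
      exact ⟨Stmt3Aux.isSquare_of_isSquare_toZMod hp
        ((Stmt3Aux.toZMod_ne_zero_iff_norm x).mp hx0) hsq, hx0⟩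
  have hTsplit : μZp p (Stmt3Aux.T ∩ Stmt3Aux.U) + μZp p (Stmt3Aux.T \ Stmt3Aux.U)
      = μZp p (Stmt3Aux.T (p := p)) :=
    measure_inter_add_diff _ Stmt3Aux.measurableSet_U
  have hTinnerm : MeasurableSet (Stmt3Aux.pmul '' (Stmt3Aux.T (p := p))) :=
    Stmt3Aux.pmul_isClosedEmbedding.measurableEmbedding.measurableSet_image'
      Stmt3Aux.measurableSet_T
  have hTdiff : μZp p (Stmt3Aux.T (p := p) \ Stmt3Aux.U)
      = (p:ENNReal)⁻¹ * ((p:ENNReal)⁻¹ * μZp p (Stmt3Aux.T (p := p))) := by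
    rw [Stmt3Aux.T_diff_U, Stmt3Aux.measure_pmul_image hTinnerm,
      Stmt3Aux.measure_pmul_image Stmt3Aux.measurableSet_T]
  -- Fubini
  set W : Set (ℤ_[p] × ℤ_[p]) := {x | IsSquare (x.1 * x.2 + r)} with hW
  have hWmeas : MeasurableSet W := by
    have hWT : W = (fun x : ℤ_[p] × ℤ_[p] => x.1 * x.2 + r) ⁻¹' Stmt3Aux.T := rfl
    rw [hWT]
    exact ((continuous_fst.mul continuous_snd).add continuous_const).measurable
      Stmt3Aux.measurableSet_T
  have hslice : ∀ a : ℤ_[p], μZp p (Prod.mk a ⁻¹' W) =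
      Set.indicator Stmt3Aux.U (fun _ => μZp p (Stmt3Aux.T (p := p))) a := by
    intro a
    by_cases ha : a ∈ Stmt3Aux.U
    · rw [Set.indicator_of_mem ha]
      have hau : IsUnit a := PadicInt.isUnit_iff.mpr ((Stmt3Aux.toZMod_ne_zero_iff_norm a).mp ha)
      have hset : Prod.mk a ⁻¹' W =
          (fun b => (hau.unit : ℤ_[p]) * b) ⁻¹' ((fun c => r + c) ⁻¹' Stmt3Aux.T) := by
        ext b
        simp only [hW, Set.mem_preimage, Set.mem_setOf_eq, Stmt3Aux.T, hau.unit_spec]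
        rw [add_comm ((a : ℤ_[p]) * b) r]
      have hTrc : Continuous (fun c : ℤ_[p] => r + c) := Continuous.add continuous_const continuous_id
      rw [hset, Stmt3Aux.measure_preimage_unit_mul _
        (hTrc.measurable Stmt3Aux.measurableSet_T),
        measure_preimage_add]
    · rw [Set.indicator_of_notMem ha]
      have hza : PadicInt.toZMod a = 0 := by
        simp only [Stmt3Aux.U, Set.mem_setOf_eq] at ha
        exact not_not.mp ha
      have hempty : Prod.mk a ⁻¹' W = ∅ := by
        ext b
        simp only [hW, Set.mem_preimage, Set.mem_setOf_eq, Set.mem_empty_iff_false, iff_false]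
        intro hsq
        have h2 := Stmt3Aux.isSquare_toZMod hsq
        rw [map_add, map_mul, hza, zero_mul, zero_add] at h2
        exact hr h2
      rw [hempty, measure_empty]
  have hmain : ((μZp p).prod (μZp p)) W
      = μZp p (Stmt3Aux.T (p := p)) * μZp p (Stmt3Aux.U) := by
    rw [Measure.prod_apply hWmeas, lintegral_congr hslice,
      lintegral_indicator Stmt3Aux.measurableSet_U, setLIntegral_const]
  rw [hmain, ENNReal.toReal_mul]
  -- real arithmetic
  set tT := (μZp p (Stmt3Aux.T (p := p))).toReal with htT
  set tU := (μZp p (Stmt3Aux.U (p := p))).toReal with htUdef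
  set tTu := (μZp p Tu).toReal with htTu
  have hp1 : (1:ℝ) < p := by exact_mod_cast hp_prime.one_lt
  have hppos : (0:ℝ) < p := by linarith
  have hpE0 : (p : ENNReal) ≠ 0 := by
    simp [hp_prime.ne_zero]
  have hpEtop : (p : ENNReal)⁻¹ ≠ ⊤ := ENNReal.inv_ne_top.mpr hpE0
  have hU_real : tU = 1 - (p:ℝ)⁻¹ := by
    rw [htUdef, Stmt3Aux.measure_U, ENNReal.toReal_sub_of_le
      (ENNReal.inv_le_one.mpr (by exact_mod_cast Nat.one_le_cast.mpr hp_prime.one_le))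
      ENNReal.one_ne_top, ENNReal.toReal_one, ENNReal.toReal_inv, ENNReal.toReal_natCast]
  have h2Tu : tTu + tTu = tU := by
    rw [htTu, htUdef, ← ENNReal.toReal_add (measure_ne_top _ _) (measure_ne_top _ _), hTuNu]
  have hTeq' : μZp p Tu + (p:ENNReal)⁻¹ * ((p:ENNReal)⁻¹ * μZp p (Stmt3Aux.T (p := p)))
      = μZp p (Stmt3Aux.T (p := p)) := by
    rw [← hTdiff, ← hTU]
    exact hTsplit
  have hTeq : tTu + (p:ℝ)⁻¹ * ((p:ℝ)⁻¹ * tT) = tT := by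
    have hcongr := congrArg ENNReal.toReal hTeq'
    rwa [ENNReal.toReal_add (measure_ne_top _ _)
        (ENNReal.mul_ne_top hpEtop (ENNReal.mul_ne_top hpEtop (measure_ne_top _ _))),
      ENNReal.toReal_mul, ENNReal.toReal_mul, ENNReal.toReal_inv, ENNReal.toReal_natCast]
      at hcongr
  have hq0 : (p:ℝ) ≠ 0 := ne_of_gt hppos
  have hqinv : (p:ℝ)⁻¹ < 1 := by
    rw [inv_lt_one_iff₀]
    right; exact hp1
  have hne : (1 : ℝ) - (p:ℝ)⁻¹ * (p:ℝ)⁻¹ ≠ 0 := by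
    have h1 : (p:ℝ)⁻¹ * (p:ℝ)⁻¹ < 1 := by
      have hpos : (0:ℝ) < (p:ℝ)⁻¹ := by positivity
      nlinarith
    linarith
  have hmul : tT * (1 - (p:ℝ)⁻¹ * (p:ℝ)⁻¹) = tTu := by
    linear_combination -hTeq
  have htTval : tT = tTu / (1 - (p:ℝ)⁻¹ * (p:ℝ)⁻¹) := by
    rw [eq_div_iff hne]; exact hmul
  have hTuval : tTu = (1 - (p:ℝ)⁻¹) / 2 := by linarith [h2Tu, hU_real]
  have hp1ne : (p:ℝ) + 1 ≠ 0 := by linarith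
  rw [hU_real]
  have hpinv0 : (0:ℝ) < 1 + (p:ℝ)⁻¹ := by positivity
  have hX : (tT * (1 - (p:ℝ)⁻¹)) * (1 + (p:ℝ)⁻¹) = (1 - (p:ℝ)⁻¹)/2 := by
    rw [← hTuval]
    linear_combination hmul
  have hgoal : (1/2 - 1/((p:ℝ)+1)) * (1 + (p:ℝ)⁻¹) = (1 - (p:ℝ)⁻¹)/2 := by
    field_simp
    ring
  exact mul_right_cancel₀ (ne_of_gt hpinv0) (hX.trans hgoal.symm)
end

section
/- Let p be an odd prime and r ∈ ℤ_p with Legendre symbol (r/p) = 1. Then the Haar measure of the set of pairs (a,b) ∈ ℤ_p² with ab + r a square in ℤ_p equals 1/2 + 1/(p(p+1)). -/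
open MeasureTheory
open scoped ENNReal NNReal
namespace Stmt4Aux
open PadicInt
variable {p : ℕ} [Fact p.Prime]

instance : IsProbabilityMeasure (μZp p) := by
  constructor
  have := Measure.addHaarMeasure_self (K₀ := (⊤ : TopologicalSpace.PositiveCompacts ℤ_[p]))
  simpa [μZp] using this

instance : (μZp p).IsAddLeftInvariant := by unfold μZp; infer_instance
instance : (μZp p).Regular := by unfold μZp; infer_instance

lemma haar_unique (ν : Measure ℤ_[p]) [SigmaFinite ν] [ν.IsAddLeftInvariant] :
    ν = ν Set.univ • μZp p := by
  have := Measure.addHaarMeasure_unique ν (⊤ : TopologicalSpace.PositiveCompacts ℤ_[p])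
  simpa [μZp] using this

instance : MeasurableSpace (ZMod p) := ⊤

lemma toZMod_eq_zero_iff (x : ℤ_[p]) : toZMod x = 0 ↔ ‖x‖ < 1 := by
  rw [show (toZMod x = 0 ↔ x ∈ RingHom.ker (toZMod : ℤ_[p] →+* ZMod p)) from
    RingHom.mem_ker.symm, ker_toZMod, IsLocalRing.mem_maximalIdeal, mem_nonunits]

lemma toZMod_lift (c : ZMod p) : toZMod ((c.val : ℤ_[p])) = c := by
  rw [map_natCast]
  simp [ZMod.natCast_val, ZMod.cast_id]

lemma fiber_eq (c : ZMod p) :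
    (toZMod ⁻¹' {c} : Set ℤ_[p]) = (fun x => (c.val : ℤ_[p]) + x) '' (toZMod ⁻¹' {0}) := by
  ext x
  simp only [Set.mem_preimage, Set.mem_singleton_iff, Set.mem_image]
  constructor
  · intro h
    exact ⟨x - (c.val : ℤ_[p]), by simp [map_sub, toZMod_lift, h], by ring⟩
  · rintro ⟨y, hy, rfl⟩
    simp [map_add, toZMod_lift, hy]

lemma measurable_fiber (c : ZMod p) : MeasurableSet (toZMod ⁻¹' {c} : Set ℤ_[p]) := by
  have h0 : (toZMod ⁻¹' {(0:ZMod p)} : Set ℤ_[p]) = Metric.ball 0 1 := by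
    ext x; simp [toZMod_eq_zero_iff, Metric.mem_ball, dist_eq_norm]
  have : (toZMod ⁻¹' {c} : Set ℤ_[p]) = (fun x => x - (c.val : ℤ_[p])) ⁻¹' (toZMod ⁻¹' {0}) := by
    ext x
    simp [map_sub, toZMod_lift, sub_eq_zero]
  rw [this, h0]
  exact (measurable_id.sub_const _) measurableSet_ball

lemma measurable_toZMod : Measurable (toZMod : ℤ_[p] → ZMod p) :=
  measurable_to_countable' (fun c => measurable_fiber c)


lemma measure_fiber (c : ZMod p) : μZp p (toZMod ⁻¹' {c}) = (p : ℝ≥0∞)⁻¹ := by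
  have hconst : ∀ c : ZMod p, μZp p (toZMod ⁻¹' {c}) = μZp p (toZMod ⁻¹' {(0:ZMod p)}) := by
    intro c
    have : (fun x => (c.val : ℤ_[p]) + x) ⁻¹' (toZMod ⁻¹' {c}) = toZMod ⁻¹' {0} := by
      ext x
      simp only [Set.mem_preimage, Set.mem_singleton_iff, map_add, toZMod_lift]
      constructor
      · intro h; linear_combination h
      · intro h; rw [h]; ring
    rw [← this, measure_preimage_add]
  have hdisj : Pairwise (Function.onFun Disjoint fun c : ZMod p => (toZMod ⁻¹' {c} : Set ℤ_[p])) := by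
    intro a b hab
    exact Set.disjoint_left.mpr (by intro x hx hx'; exact hab (hx.symm.trans hx'))
  have hcover : (⋃ c : ZMod p, (toZMod ⁻¹' {c} : Set ℤ_[p])) = Set.univ := by
    ext x; simp
  have h1 : (1 : ℝ≥0∞) = ∑ c : ZMod p, μZp p (toZMod ⁻¹' {c}) := by
    rw [← measure_univ (μ := μZp p), ← hcover,
      measure_iUnion hdisj (fun c => measurable_fiber c), tsum_fintype]
  rw [Finset.sum_congr rfl (fun c _ => hconst c), Finset.sum_const, Finset.card_univ,
    ZMod.card] at h1
  have hp0 : ((p : ℝ≥0∞)) ≠ 0 := by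
    exact_mod_cast Nat.cast_ne_zero.mpr (Fact.out : p.Prime).ne_zero
  rw [hconst c]
  rw [nsmul_eq_mul] at h1
  exact ENNReal.eq_inv_of_mul_eq_one_left (by rw [mul_comm] at h1; exact h1.symm)

lemma measure_preimage_affine {u : ℤ_[p]} (hu : IsUnit u) (t : ℤ_[p]) {A : Set ℤ_[p]}
    (hA : MeasurableSet A) : μZp p ((fun x => u * x + t) ⁻¹' A) = μZp p A := by
  set f : ℤ_[p] → ℤ_[p] := fun x => u * x + t with hf
  have hfm : Measurable f := (continuous_const.mul continuous_id).add continuous_const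
    |>.measurable
  set ν : Measure ℤ_[p] := (μZp p).map f with hν
  have hinv : ν.IsAddLeftInvariant := by
    constructor
    intro c
    obtain ⟨w, hw⟩ := hu.exists_left_inv
    have hcomp : (fun x => c + x) ∘ f = f ∘ (fun x => w * c + x) := by
      funext x
      simp only [Function.comp, hf]
      linear_combination (-c) * hw
    rw [hν, Measure.map_map (measurable_const_add c) hfm, hcomp,
      ← Measure.map_map hfm (measurable_const_add (w * c)),
      MeasureTheory.map_add_left_eq_self (μZp p) (w * c)]
  have : IsProbabilityMeasure ν := Measure.isProbabilityMeasure_map hfm.aemeasurable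
  have := haar_unique ν
  rw [measure_univ, one_smul] at this
  rw [← Measure.map_apply hfm hA, ← hν, this]

lemma pNeZero : ((p:ℤ_[p])) ≠ 0 :=
  Nat.cast_ne_zero.mpr (Fact.out : p.Prime).ne_zero

lemma pmul_embedding : MeasurableEmbedding (fun x : ℤ_[p] => (p:ℤ_[p]) * x) := by
  have hinj : Function.Injective (fun x : ℤ_[p] => (p:ℤ_[p]) * x) :=
    mul_right_injective₀ pNeZero
  exact ((continuous_const.mul continuous_id).isClosedEmbedding hinj).measurableEmbedding

lemma range_pmul :
    Set.range (fun x : ℤ_[p] => (p:ℤ_[p]) * x) = (toZMod ⁻¹' {0} : Set ℤ_[p]) := by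
  ext x
  simp only [Set.mem_range, Set.mem_preimage, Set.mem_singleton_iff]
  rw [show (toZMod x = 0 ↔ x ∈ RingHom.ker (toZMod : ℤ_[p] →+* ZMod p)) from
    RingHom.mem_ker.symm, ker_toZMod, PadicInt.maximalIdeal_eq_span_p,
    Ideal.mem_span_singleton]
  constructor
  · rintro ⟨y, rfl⟩; exact Dvd.intro y rfl
  · rintro ⟨y, rfl⟩; exact ⟨y, rfl⟩

lemma measure_image_pmul {A : Set ℤ_[p]} (hA : MeasurableSet A) :
    μZp p ((fun x : ℤ_[p] => (p:ℤ_[p]) * x) '' A) = (p:ℝ≥0∞)⁻¹ * μZp p A := by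
  set f : ℤ_[p] → ℤ_[p] := fun x => (p:ℤ_[p]) * x with hf
  have hemb : MeasurableEmbedding f := pmul_embedding
  set ν : Measure ℤ_[p] := (μZp p).comap f with hν
  have hcomap : ∀ s : Set ℤ_[p], ν s = μZp p (f '' s) := fun s => hemb.comap_apply _ s
  have hinv : ν.IsAddLeftInvariant := by
    constructor
    intro c
    ext A' hA'
    rw [Measure.map_apply (measurable_const_add c) hA', hcomap, hcomap]
    have himg : f '' ((fun x => c + x) ⁻¹' A') = (fun x => (p:ℤ_[p]) * c + x) ⁻¹' (f '' A') := by
      ext x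
      simp only [Set.mem_image, Set.mem_preimage, hf]
      constructor
      · rintro ⟨y, hy, rfl⟩
        exact ⟨c + y, hy, by ring⟩
      · rintro ⟨a, ha, hpa⟩
        refine ⟨a - c, by simpa using ha, by linear_combination hpa⟩
    rw [himg, measure_preimage_add]
  have hfin : IsFiniteMeasure ν := by
    constructor
    rw [hcomap, Set.image_univ, range_pmul, measure_fiber]
    exact ENNReal.inv_lt_top.mpr (by exact_mod_cast (Fact.out : p.Prime).pos)
  have huniq := haar_unique ν
  have huniv : ν Set.univ = (p:ℝ≥0∞)⁻¹ := by
    rw [hcomap, Set.image_univ, range_pmul, measure_fiber]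
  rw [← hcomap, huniq, huniv]
  rfl

open scoped Classical in
noncomputable def QF (p : ℕ) [Fact p.Prime] : Finset (ZMod p) :=
  Finset.univ.filter (fun c => c ≠ 0 ∧ IsSquare c)

lemma mem_QF {c : ZMod p} : c ∈ QF p ↔ c ≠ 0 ∧ IsSquare c := by
  classical
  simp [QF]

lemma card_QF (hp : p ≠ 2) : 2 * (QF p).card = p - 1 := by
  classical
  have hchar : ringChar (ZMod p) ≠ 2 := by
    rw [ZMod.ringChar_zmod_n]; exact hp
  have key : ∀ a ∈ QF p,
      ({x : ZMod p | x ^ 2 = a}.toFinset).card = 2 := by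
    intro a ha
    obtain ⟨ha0, hasq⟩ := mem_QF.mp ha
    have := quadraticChar_card_sqrts hchar a
    rw [(quadraticChar_one_iff_isSquare ha0).mpr hasq] at this
    exact_mod_cast this
  have hT : (Finset.univ.filter (fun y : ZMod p => y ≠ 0)).card = p - 1 := by
    rw [Finset.filter_ne', Finset.card_erase_of_mem (Finset.mem_univ _),
      Finset.card_univ, ZMod.card]
  have hfib := Finset.card_eq_sum_card_fiberwise
    (f := fun y : ZMod p => y ^ 2) (s := Finset.univ.filter (fun y : ZMod p => y ≠ 0))
    (t := QF p) (by
      intro y hy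
      rw [Finset.mem_coe, Finset.mem_filter] at hy
      exact mem_QF.mpr ⟨pow_ne_zero 2 hy.2, ⟨y, by ring⟩⟩)
  rw [hT] at hfib
  have : ∀ a ∈ QF p,
      ((Finset.univ.filter (fun y : ZMod p => y ≠ 0)).filter (fun y => y ^ 2 = a)).card = 2 := by
    intro a ha
    obtain ⟨ha0, _⟩ := mem_QF.mp ha
    rw [Finset.filter_filter]
    have heq : (Finset.univ.filter fun y : ZMod p => y ≠ 0 ∧ y ^ 2 = a)
        = Finset.univ.filter (fun y : ZMod p => y ^ 2 = a) := by
      apply Finset.filter_congr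
      intro y _
      constructor
      · exact fun h => h.2
      · intro h
        refine ⟨fun h0 => ha0 ?_, h⟩
        rw [← h, h0]; ring
    rw [heq]
    have hk := key a ha
    rwa [Set.toFinset_setOf] at hk
  rw [Finset.sum_congr rfl this, Finset.sum_const, smul_eq_mul] at hfib
  omega

lemma isUnit_of_toZMod_ne_zero {x : ℤ_[p]} (hx : toZMod x ≠ 0) : IsUnit x := by
  rw [isUnit_iff]
  by_contra h
  exact hx ((toZMod_eq_zero_iff x).mpr (lt_of_le_of_ne (norm_le_one x) h))

lemma two_unit (hp : p ≠ 2) : ‖(2:ℤ_[p])‖ = 1 := by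
  have h2 : toZMod (2:ℤ_[p]) ≠ 0 := by
    have : ((2:ℕ) : ZMod p) ≠ 0 := by
      rw [Ne, ZMod.natCast_eq_zero_iff]
      intro hdvd
      exact hp ((Nat.prime_dvd_prime_iff_eq Fact.out Nat.prime_two).mp hdvd)
    rw [show (2:ℤ_[p]) = ((2:ℕ):ℤ_[p]) by norm_cast, map_natCast]
    exact this
  exact isUnit_iff.mp (isUnit_of_toZMod_ne_zero h2)

lemma isSquare_iff_toZMod (hp : p ≠ 2) {x : ℤ_[p]} (hx : toZMod x ≠ 0) :
    IsSquare x ↔ IsSquare (toZMod x) := by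
  constructor
  · rintro ⟨y, rfl⟩
    exact ⟨toZMod y, by rw [map_mul]⟩
  · rintro ⟨y, hy⟩
    have hy0 : y ≠ 0 := by
      rintro rfl
      exact hx (by rw [hy]; ring)
    set a : ℤ_[p] := ((y.val : ℕ) : ℤ_[p]) with ha
    have hta : toZMod a = y := toZMod_lift y
    have hanorm : ‖a‖ = 1 := isUnit_iff.mp (isUnit_of_toZMod_ne_zero (by rw [hta]; exact hy0))
    set F : Polynomial ℤ_[p] := Polynomial.X ^ 2 - Polynomial.C x with hF
    have hFeval : ∀ z : ℤ_[p], F.eval z = z ^ 2 - x := by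
      intro z; simp [hF]
    have hFder : F.derivative = Polynomial.C 2 * Polynomial.X := by
      simp [hF, Polynomial.derivative_X_pow]
      try ring
      exact (map_ofNat Polynomial.C 2).symm
    have hFdeval : ∀ z : ℤ_[p], F.derivative.eval z = 2 * z := by
      intro z; rw [hFder]; simp
    have hker : ‖a ^ 2 - x‖ < 1 := by
      rw [← toZMod_eq_zero_iff, map_sub, map_pow, hta, hy]
      ring
    have hnorm : ‖F.eval a‖ < ‖F.derivative.eval a‖ ^ 2 := by
      rw [hFeval, hFdeval, norm_mul, two_unit hp, hanorm]
      simpa using hker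
    obtain ⟨z, hz, -⟩ := hensels_lemma hnorm
    rw [Polynomial.coe_aeval_eq_eval, hFeval] at hz
    exact ⟨z, by rw [← sq, ← sub_eq_zero]; linear_combination -hz⟩

def Sq (p : ℕ) [Fact p.Prime] : Set ℤ_[p] := {x | IsSquare x}

lemma isClosed_Sq : IsClosed (Sq p) := by
  have : Sq p = (fun y : ℤ_[p] => y * y) '' Set.univ := by
    ext x
    simp only [Sq, Set.mem_setOf_eq, Set.image_univ, Set.mem_range, IsSquare]
    exact ⟨fun ⟨y, h⟩ => ⟨y, h.symm⟩, fun ⟨y, h⟩ => ⟨y, h.symm⟩⟩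
  rw [this]
  exact (isCompact_univ.image (continuous_id.mul continuous_id)).isClosed

lemma measurableSet_Sq : MeasurableSet (Sq p) := isClosed_Sq.measurableSet

lemma Sq_inter_eq :
    Sq p ∩ toZMod ⁻¹' {0} =
      (fun x : ℤ_[p] => (p:ℤ_[p]) * x) '' ((fun x : ℤ_[p] => (p:ℤ_[p]) * x) '' Sq p) := by
  ext x
  simp only [Set.mem_inter_iff, Set.mem_preimage, Set.mem_singleton_iff, Set.mem_image, Sq,
    Set.mem_setOf_eq]
  constructor
  · rintro ⟨⟨y, rfl⟩, h0⟩
    have hy0 : toZMod y = 0 := by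
      rw [map_mul] at h0
      exact mul_self_eq_zero.mp h0
    have : y ∈ Set.range (fun x : ℤ_[p] => (p:ℤ_[p]) * x) := by
      rw [range_pmul]; exact hy0
    obtain ⟨z, rfl⟩ := this
    exact ⟨(p:ℤ_[p]) * (z * z), ⟨z * z, ⟨z, rfl⟩, by ring⟩, by ring⟩
  · rintro ⟨w, ⟨v, ⟨z, rfl⟩, rfl⟩, rfl⟩
    constructor
    · exact ⟨(p:ℤ_[p]) * z, by ring⟩
    · have : (p:ℤ_[p]) * ((p:ℤ_[p]) * (z * z)) ∈ Set.range (fun x : ℤ_[p] => (p:ℤ_[p]) * x) :=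
        ⟨(p:ℤ_[p]) * (z * z), rfl⟩
      rw [range_pmul] at this
      exact this

lemma measure_preimage_finset (T : Finset (ZMod p)) :
    μZp p (toZMod ⁻¹' (T : Set (ZMod p))) = (T.card : ℝ≥0∞) * (p:ℝ≥0∞)⁻¹ := by
  have hcover : (toZMod ⁻¹' (T : Set (ZMod p)) : Set ℤ_[p]) =
      ⋃ c ∈ T, (toZMod ⁻¹' {c} : Set ℤ_[p]) := by
    ext x; simp
  rw [hcover, measure_biUnion_finset ?_ (fun c _ => measurable_fiber c)]
  · rw [Finset.sum_congr rfl (fun c _ => measure_fiber c), Finset.sum_const, nsmul_eq_mul]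
  · intro a _ b _ hab
    exact Set.disjoint_left.mpr (by intro x hx hx'; exact hab (hx.symm.trans hx'))

lemma Sq_partition (hp : p ≠ 2) :
    Sq p = toZMod ⁻¹' ((QF p : Finset (ZMod p)) : Set (ZMod p)) ∪ (Sq p ∩ toZMod ⁻¹' {0}) := by
  ext x
  simp only [Set.mem_union, Set.mem_preimage, Finset.coe_sort_coe, Finset.mem_coe, mem_QF,
    Set.mem_inter_iff, Set.mem_singleton_iff]
  constructor
  · intro hx
    by_cases h0 : toZMod x = 0
    · exact Or.inr ⟨hx, h0⟩
    · exact Or.inl ⟨h0, (isSquare_iff_toZMod hp h0).mp hx⟩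
  · rintro (h | h)
    · exact (isSquare_iff_toZMod hp h.1).mpr h.2
    · exact h.1

lemma measure_SqInter (hp : p ≠ 2) :
    (μZp p (Sq p ∩ toZMod ⁻¹' {0})).toReal = 1/(2*(p:ℝ)*((p:ℝ)+1)) := by
  have hSqM : MeasurableSet (Sq p) := measurableSet_Sq
  have hF0 : MeasurableSet (toZMod ⁻¹' {0} : Set ℤ_[p]) := measurable_fiber 0
  have hM : MeasurableSet (Sq p ∩ toZMod ⁻¹' {0}) := hSqM.inter hF0
  have e2 : μZp p (Sq p ∩ toZMod ⁻¹' {0}) = (p:ℝ≥0∞)⁻¹ * ((p:ℝ≥0∞)⁻¹ * μZp p (Sq p)) := by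
    rw [Sq_inter_eq, measure_image_pmul (pmul_embedding.measurableSet_image' hSqM),
      measure_image_pmul hSqM]
  have hdisj : Disjoint (toZMod ⁻¹' ((QF p : Finset (ZMod p)) : Set (ZMod p)))
      (Sq p ∩ toZMod ⁻¹' {0}) := by
    refine Set.disjoint_left.mpr ?_
    rintro x hx ⟨-, hx0⟩
    rw [Set.mem_preimage, Finset.mem_coe, mem_QF] at hx
    exact hx.1 hx0
  have e1 : μZp p (Sq p) =
      ((QF p).card : ℝ≥0∞) * (p:ℝ≥0∞)⁻¹ + μZp p (Sq p ∩ toZMod ⁻¹' {0}) := by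
    conv_lhs => rw [Sq_partition hp]
    rw [measure_union hdisj hM, measure_preimage_finset]
  have hfin1 : μZp p (Sq p) ≠ ⊤ := measure_ne_top _ _
  have hfin2 : μZp p (Sq p ∩ toZMod ⁻¹' {0}) ≠ ⊤ := measure_ne_top _ _
  set s : ℝ := (μZp p (Sq p)).toReal with hs
  set m : ℝ := (μZp p (Sq p ∩ toZMod ⁻¹' {0})).toReal with hm
  have hpR : (0:ℝ) < (p:ℝ) := by exact_mod_cast (Fact.out : p.Prime).pos
  have e1' : s = ((QF p).card : ℝ) * (p:ℝ)⁻¹ + m := by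
    rw [hs, e1, ENNReal.toReal_add (ENNReal.mul_ne_top (ENNReal.natCast_ne_top _)
        (ENNReal.inv_ne_top.mpr (by exact_mod_cast (Fact.out : p.Prime).ne_zero))) hfin2, ENNReal.toReal_mul,
      ENNReal.toReal_inv]
    norm_num
    exact hm.symm
  have e2' : m = (p:ℝ)⁻¹ * ((p:ℝ)⁻¹ * s) := by
    rw [hm, e2, ENNReal.toReal_mul, ENNReal.toReal_mul, ENNReal.toReal_inv]
    norm_num [hs]
  have hq : 2 * ((QF p).card : ℝ) = (p:ℝ) - 1 := by
    have h := card_QF (p := p) hp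
    have hp1 : 1 ≤ p := (Fact.out : p.Prime).one_le
    calc 2 * ((QF p).card:ℝ) = ((2 * (QF p).card : ℕ) : ℝ) := by push_cast; ring
      _ = ((p - 1 : ℕ) : ℝ) := by rw [h]
      _ = (p:ℝ) - 1 := by rw [Nat.cast_sub hp1]; norm_num
  have hp1 : (p:ℝ) - 1 ≠ 0 := by
    have : (2:ℝ) ≤ (p:ℝ) := by exact_mod_cast (Fact.out : p.Prime).two_le
    linarith
  have hp0 : (p:ℝ) ≠ 0 := ne_of_gt hpR
  have hpp1 : (p:ℝ) + 1 ≠ 0 := by linarith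
  field_simp at e1' e2' hq ⊢
  have key : m * (2*(p:ℝ)*((p:ℝ)+1)) * ((p:ℝ)-1) = 1 * ((p:ℝ)-1) := by
    linear_combination 2*e1' + 2*(p:ℝ)*e2' + hq
  exact mul_right_cancel₀ hp1 (by linear_combination key)

open scoped Classical in
noncomputable def Fval (p : ℕ) [Fact p.Prime] (m : ℝ≥0∞) (R : ZMod p) : ℝ≥0∞ :=
  if R ∈ QF p then (p:ℝ≥0∞)⁻¹ * (p:ℝ≥0∞)⁻¹ else if R = 0 then m * (p:ℝ≥0∞)⁻¹ else 0

lemma main_measure (hp : p ≠ 2) (r : ℤ_[p]) (hr0 : toZMod r ≠ 0)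
    (hrsq : IsSquare (toZMod r)) :
    ((μZp p).prod (μZp p)) {x : ℤ_[p] × ℤ_[p] | IsSquare (x.1 * x.2 + r)}
      = (p:ℝ≥0∞) * ((p:ℝ≥0∞)⁻¹ * (p:ℝ≥0∞)⁻¹)
        + ((p - 1 : ℕ) : ℝ≥0∞) * (((QF p).card : ℝ≥0∞) * ((p:ℝ≥0∞)⁻¹ * (p:ℝ≥0∞)⁻¹)
            + μZp p (Sq p ∩ toZMod ⁻¹' {0}) * (p:ℝ≥0∞)⁻¹) := by
  classical
  set μ := μZp p
  set ν := μ.prod μ with hν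
  set m : ℝ≥0∞ := μ (Sq p ∩ toZMod ⁻¹' {0}) with hmdef
  set E : Set (ℤ_[p] × ℤ_[p]) := {x | IsSquare (x.1 * x.2 + r)} with hE
  have hMmul : Measurable (fun x : ℤ_[p] × ℤ_[p] => x.1 * x.2 + r) :=
    ((continuous_fst.mul continuous_snd).add continuous_const).measurable
  have hEeq : E = (fun x : ℤ_[p] × ℤ_[p] => x.1 * x.2 + r) ⁻¹' (Sq p) := rfl
  have hEmeas : MeasurableSet E := by
    rw [hEeq]; exact hMmul measurableSet_Sq
  set P : ZMod p → ZMod p → Set (ℤ_[p] × ℤ_[p]) :=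
    fun c d => (toZMod ⁻¹' {c}) ×ˢ (toZMod ⁻¹' {d}) with hP
  have hPmeas : ∀ c d, MeasurableSet (P c d) :=
    fun c d => (measurable_fiber c).prod (measurable_fiber d)
  have hSqf0 : MeasurableSet (Sq p ∩ toZMod ⁻¹' {0}) :=
    measurableSet_Sq.inter (measurable_fiber 0)
  -- decompose
  have hcover : E = ⋃ cd : ZMod p × ZMod p, E ∩ P cd.1 cd.2 := by
    ext x
    simp only [Set.mem_iUnion, Set.mem_inter_iff, hP, Set.mem_prod, Set.mem_preimage,
      Set.mem_singleton_iff]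
    constructor
    · intro hx; exact ⟨(toZMod x.1, toZMod x.2), hx, rfl, rfl⟩
    · rintro ⟨cd, hx, -⟩; exact hx
  have hsum : ν E = ∑ cd : ZMod p × ZMod p, ν (E ∩ P cd.1 cd.2) := by
    have hdisj2 : Pairwise (Function.onFun Disjoint fun cd : ZMod p × ZMod p => E ∩ P cd.1 cd.2) := by
      intro a b hab
      refine Set.disjoint_left.mpr ?_
      rintro x ⟨-, hxa⟩ ⟨-, hxb⟩
      apply hab
      obtain ⟨ha1, ha2⟩ := hxa
      obtain ⟨hb1, hb2⟩ := hxb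
      simp only [Set.mem_preimage, Set.mem_singleton_iff] at ha1 ha2 hb1 hb2
      exact Prod.ext (ha1.symm.trans hb1) (ha2.symm.trans hb2)
    conv_lhs => rw [hcover]
    rw [measure_iUnion hdisj2 (fun cd => hEmeas.inter (hPmeas cd.1 cd.2)), tsum_fintype]
  -- value on each piece
  have hval : ∀ c d : ZMod p, ν (E ∩ P c d) = Fval p m (c * d + toZMod r) := by
    intro c d
    by_cases hQ : c * d + toZMod r ∈ QF p
    · -- full coset
      have hsub : P c d ⊆ E := by
        rintro ⟨a, b⟩ ⟨ha, hb⟩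
        simp only [Set.mem_preimage, Set.mem_singleton_iff] at ha hb
        have htz : toZMod (a * b + r) = c * d + toZMod r := by
          rw [map_add, map_mul, ha, hb]
        obtain ⟨hne, hsq⟩ := mem_QF.mp hQ
        exact (isSquare_iff_toZMod hp (by rw [htz]; exact hne)).mpr (by rw [htz]; exact hsq)
      rw [Set.inter_eq_self_of_subset_right hsub, Fval, if_pos hQ, hν, Measure.prod_prod,
        measure_fiber, measure_fiber]
    · by_cases h0 : c * d + toZMod r = 0
      · -- the interesting case
        have hc0 : c ≠ 0 := by
          rintro rfl
          rw [zero_mul, zero_add] at h0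
          exact hr0 h0
        set X : Set (ℤ_[p] × ℤ_[p]) :=
          {x | toZMod x.1 = c ∧ x.1 * x.2 + r ∈ Sq p ∩ toZMod ⁻¹' {0}} with hX
        have hEX : E ∩ P c d = X := by
          ext ⟨a, b⟩
          simp only [hX, hE, hP, Set.mem_inter_iff, Set.mem_setOf_eq, Set.mem_prod,
            Set.mem_preimage, Set.mem_singleton_iff]
          constructor
          · rintro ⟨hsq, ha, hb⟩
            refine ⟨ha, hsq, ?_⟩
            rw [map_add, map_mul, ha, hb, h0]
          · rintro ⟨ha, hsq, hz⟩
            refine ⟨hsq, ha, ?_⟩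
            rw [map_add, map_mul, ha] at hz
            have : c * toZMod b = c * d := by
              have := sub_eq_zero.mpr (hz.trans h0.symm)
              have h2 : c * toZMod b - c * d = 0 := by linear_combination hz - h0
              linear_combination h2
            exact mul_left_cancel₀ hc0 this
        have hXmeas : MeasurableSet X := by
          have : X = ((fun x : ℤ_[p] × ℤ_[p] => toZMod x.1) ⁻¹' {c}) ∩
              ((fun x : ℤ_[p] × ℤ_[p] => x.1 * x.2 + r) ⁻¹' (Sq p ∩ toZMod ⁻¹' {0})) := rfl
          rw [this]
          exact ((measurable_toZMod.comp measurable_fst) (MeasurableSet.singleton c)).inter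
            (hMmul hSqf0)
        have hslice : (fun a : ℤ_[p] => μ (Prod.mk a ⁻¹' X)) =
            (toZMod ⁻¹' {c}).indicator (fun _ => m) := by
          funext a
          by_cases hac : toZMod a = c
          · have hXa : Prod.mk a ⁻¹' X = (fun b => a * b + r) ⁻¹' (Sq p ∩ toZMod ⁻¹' {0}) := by
              ext b
              simp [hX, hac]
            rw [hXa, measure_preimage_affine
              (isUnit_of_toZMod_ne_zero (by rw [hac]; exact hc0)) r hSqf0]
            simp [Set.indicator, hac, hmdef]
            rfl
          · have hXa : Prod.mk a ⁻¹' X = ∅ := by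
              ext b
              simp [hX, hac]
            simp [hXa, Set.indicator, hac]
        rw [hEX, hν, Measure.prod_apply hXmeas]
        simp only [hslice]
        rw [lintegral_indicator_const (measurable_fiber c), measure_fiber, Fval,
          if_neg hQ, if_pos h0]
      · -- empty
        have hempty : E ∩ P c d = ∅ := by
          ext ⟨a, b⟩
          simp only [hE, hP, Set.mem_inter_iff, Set.mem_setOf_eq, Set.mem_prod,
            Set.mem_preimage, Set.mem_singleton_iff, Set.mem_empty_iff_false, iff_false]
          rintro ⟨hsq, ha, hb⟩
          have htz : toZMod (a * b + r) = c * d + toZMod r := by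
            rw [map_add, map_mul, ha, hb]
          apply hQ
          refine mem_QF.mpr ⟨by rw [htz] at *; exact h0, ?_⟩
          rw [← htz]
          obtain ⟨y, hy⟩ := hsq
          exact ⟨toZMod y, by rw [hy, map_mul]⟩
        rw [hempty, Fval, if_neg hQ, if_neg h0]
        simp
  -- now sum up
  rw [hsum]
  rw [Fintype.sum_prod_type]
  simp only [hval]
  have hrQF : toZMod r ∈ QF p := mem_QF.mpr ⟨hr0, hrsq⟩
  have hFsum : ∑ R : ZMod p, Fval p m R =
      ((QF p).card : ℝ≥0∞) * ((p:ℝ≥0∞)⁻¹ * (p:ℝ≥0∞)⁻¹) + m * (p:ℝ≥0∞)⁻¹ := by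
    have hsplit : ∀ R : ZMod p, Fval p m R =
        (if R ∈ QF p then (p:ℝ≥0∞)⁻¹ * (p:ℝ≥0∞)⁻¹ else 0)
          + (if R = 0 then m * (p:ℝ≥0∞)⁻¹ else 0) := by
      intro R
      rw [Fval]
      by_cases hR : R ∈ QF p
      · rw [if_pos hR, if_pos hR, if_neg (mem_QF.mp hR).1, add_zero]
      · rw [if_neg hR, if_neg hR, zero_add]
    rw [Finset.sum_congr rfl (fun R _ => hsplit R), Finset.sum_add_distrib]
    congr 1
    · rw [Finset.sum_ite_mem, Finset.univ_inter, Finset.sum_const, nsmul_eq_mul]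
    · rw [Finset.sum_ite_eq' Finset.univ (0 : ZMod p) (fun _ => m * (p:ℝ≥0∞)⁻¹),
        if_pos (Finset.mem_univ _)]
  have hinner : ∀ c : ZMod p, (∑ d : ZMod p, Fval p m (c * d + toZMod r)) =
      if c = 0 then (p:ℝ≥0∞) * ((p:ℝ≥0∞)⁻¹ * (p:ℝ≥0∞)⁻¹)
      else ((QF p).card : ℝ≥0∞) * ((p:ℝ≥0∞)⁻¹ * (p:ℝ≥0∞)⁻¹) + m * (p:ℝ≥0∞)⁻¹ := by
    intro c
    by_cases hc : c = 0
    · rw [if_pos hc]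
      have : ∀ d : ZMod p, Fval p m (c * d + toZMod r) = (p:ℝ≥0∞)⁻¹ * (p:ℝ≥0∞)⁻¹ := by
        intro d
        rw [hc, zero_mul, zero_add, Fval, if_pos hrQF]
      rw [Finset.sum_congr rfl (fun d _ => this d), Finset.sum_const, Finset.card_univ,
        ZMod.card, nsmul_eq_mul]
    · rw [if_neg hc, ← hFsum]
      exact Fintype.sum_equiv ((Equiv.mulLeft₀ c hc).trans (Equiv.addRight (toZMod r)))
        _ _ (fun d => by simp)
  rw [Finset.sum_congr rfl (fun c _ => hinner c)]
  rw [← Finset.add_sum_erase Finset.univ _ (Finset.mem_univ (0 : ZMod p)), if_pos rfl]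
  congr 1
  have hval' : ∀ c ∈ Finset.univ.erase (0 : ZMod p),
      (if c = 0 then (p:ℝ≥0∞) * ((p:ℝ≥0∞)⁻¹ * (p:ℝ≥0∞)⁻¹)
      else ((QF p).card : ℝ≥0∞) * ((p:ℝ≥0∞)⁻¹ * (p:ℝ≥0∞)⁻¹) + m * (p:ℝ≥0∞)⁻¹)
      = ((QF p).card : ℝ≥0∞) * ((p:ℝ≥0∞)⁻¹ * (p:ℝ≥0∞)⁻¹) + m * (p:ℝ≥0∞)⁻¹ := by
    intro c hc
    rw [if_neg (Finset.mem_erase.mp hc).1]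
  rw [Finset.sum_congr rfl hval', Finset.sum_const, Finset.card_erase_of_mem (Finset.mem_univ _),
    Finset.card_univ, ZMod.card, nsmul_eq_mul]

end Stmt4Aux

theorem stmt4 (p : ℕ) [Fact p.Prime] (hp : p ≠ 2) (r : ℤ_[p])
    (hr0 : PadicInt.toZMod r ≠ 0) (hrsq : IsSquare (PadicInt.toZMod r)) :
    (((μZp p).prod (μZp p)) {x : ℤ_[p] × ℤ_[p] | IsSquare (x.1 * x.2 + r)}).toReal
      = 1/2 + 1/(p*(p+1)) := by
  have hpP : p.Prime := Fact.out
  rw [Stmt4Aux.main_measure hp r hr0 hrsq]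
  have hp0 : ((p:ℝ≥0∞)) ≠ 0 := by exact_mod_cast hpP.ne_zero
  have hinvne : ((p:ℝ≥0∞))⁻¹ ≠ ⊤ := ENNReal.inv_ne_top.mpr hp0
  have hmne : μZp p (Stmt4Aux.Sq p ∩ PadicInt.toZMod ⁻¹' {0}) ≠ ⊤ := measure_ne_top _ _
  have h1 : (p:ℝ≥0∞) * ((p:ℝ≥0∞)⁻¹ * (p:ℝ≥0∞)⁻¹) ≠ ⊤ :=
    ENNReal.mul_ne_top (ENNReal.natCast_ne_top _) (ENNReal.mul_ne_top hinvne hinvne)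
  have h2 : ((p - 1 : ℕ) : ℝ≥0∞) * (((Stmt4Aux.QF p).card : ℝ≥0∞) *
      ((p:ℝ≥0∞)⁻¹ * (p:ℝ≥0∞)⁻¹)
      + μZp p (Stmt4Aux.Sq p ∩ PadicInt.toZMod ⁻¹' {0}) * (p:ℝ≥0∞)⁻¹) ≠ ⊤ :=
    ENNReal.mul_ne_top (ENNReal.natCast_ne_top _)
      (ENNReal.add_ne_top.mpr ⟨ENNReal.mul_ne_top (ENNReal.natCast_ne_top _)
        (ENNReal.mul_ne_top hinvne hinvne), ENNReal.mul_ne_top hmne hinvne⟩)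
  rw [ENNReal.toReal_add h1 h2]
  simp only [ENNReal.toReal_mul]
  rw [ENNReal.toReal_add (ENNReal.mul_ne_top (ENNReal.natCast_ne_top _)
      (ENNReal.mul_ne_top hinvne hinvne)) (ENNReal.mul_ne_top hmne hinvne)]
  simp only [ENNReal.toReal_mul, ENNReal.toReal_inv, ENNReal.toReal_natCast]
  rw [Stmt4Aux.measure_SqInter hp]
  have hp1 : 1 ≤ p := hpP.one_le
  have hpR : (2:ℝ) ≤ (p:ℝ) := by exact_mod_cast hpP.two_le
  have hq : 2 * ((Stmt4Aux.QF p).card : ℝ) = (p:ℝ) - 1 := by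
    have h := Stmt4Aux.card_QF (p := p) hp
    calc 2 * ((Stmt4Aux.QF p).card:ℝ) = ((2 * (Stmt4Aux.QF p).card : ℕ) : ℝ) := by
          push_cast; ring
      _ = ((p - 1 : ℕ) : ℝ) := by rw [h]
      _ = (p:ℝ) - 1 := by rw [Nat.cast_sub hp1]; norm_num
  have hq' : ((Stmt4Aux.QF p).card : ℝ) = ((p:ℝ) - 1)/2 := by linarith
  rw [hq', Nat.cast_sub hp1]
  have hp0R : (p:ℝ) ≠ 0 := by positivity
  have hpp1 : (p:ℝ) + 1 ≠ 0 := by positivity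
  push_cast
  field_simp
  ring
end

section
/- Let p be an odd prime. The Haar measure of the set of Diophantine pairs over ℤ_p, i.e. pairs (a,b) ∈ ℤ_p² with ab + 1 a square in ℤ_p, equals 1/2 + 1/(p(p+1)). -/
open MeasureTheory

namespace Stmt5

variable (p : ℕ) [Fact p.Prime]

instance : Measure.IsAddHaarMeasure (μZp p) := by unfold μZp; infer_instance

lemma univ_eq : μZp p Set.univ = 1 := by
  simpa [μZp] using Measure.addHaarMeasure_self (K₀ := (⊤ : TopologicalSpace.PositiveCompacts ℤ_[p]))

instance : IsProbabilityMeasure (μZp p) := ⟨univ_eq p⟩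

/-- scaling: measure of a multiplicative image -/
lemma mul_image {a : ℤ_[p]} (ha : a ≠ 0) (A : Set ℤ_[p]) :
    μZp p ((a * ·) '' A) = μZp p (Set.range (a * ·)) * μZp p A := by
  have hcont : Continuous (a * ·) := continuous_const.mul continuous_id
  have hinj : Function.Injective (a * ·) := fun x y h => mul_left_cancel₀ ha h
  have hce : Topology.IsClosedEmbedding (a * ·) := hcont.isClosedEmbedding hinj
  have hme : MeasurableEmbedding (a * ·) := hce.measurableEmbedding
  set ν : Measure ℤ_[p] := (μZp p).comap (a * ·) with hν
  have hνap : ∀ s : Set ℤ_[p], ν s = μZp p ((a * ·) '' s) := fun s => hme.comap_apply _ s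
  have hinv : ν.IsAddLeftInvariant := by
    constructor
    intro c
    ext s hs
    rw [Measure.map_apply (measurable_const_add c) hs, hνap, hνap]
    have himg : (a * ·) '' ((c + ·) ⁻¹' s) = (a * c + ·) ⁻¹' ((a * ·) '' s) := by
      ext z
      constructor
      · rintro ⟨y, hy, rfl⟩
        exact ⟨c + y, hy, by ring⟩
      · rintro ⟨y, hy, hz⟩
        simp only at hz
        refine ⟨y - c, by simpa using hy, by simp only; linear_combination hz⟩
    rw [himg]
    have : (a * c + ·) ⁻¹' ((a * ·) '' s) = (fun x => a * c + x) ⁻¹' ((a * ·) '' s) := rfl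
    rw [this, measure_preimage_add]
  have hfin : IsFiniteMeasure ν := by
    constructor
    rw [hνap]
    exact measure_lt_top _ _
  have heq := Measure.isAddInvariant_eq_smul_of_compactSpace ν (μZp p)
  have key : ∀ s : Set ℤ_[p], ν s = ν Set.univ * μZp p s := by
    intro s
    have h1 : ν s = (ν.addHaarScalarFactor (μZp p) : ENNReal) * μZp p s := by
      conv_lhs => rw [heq]
      simp [Measure.smul_apply, smul_eq_mul]
    have h2 : ν Set.univ = (ν.addHaarScalarFactor (μZp p) : ENNReal) := by
      conv_lhs => rw [heq]
      rw [Measure.smul_apply, univ_eq, ENNReal.smul_def, smul_eq_mul, mul_one]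
    rw [h1, h2]
  rw [← Set.image_univ, ← hνap, ← hνap, key]



lemma p_ne_zero : (p : ℤ_[p]) ≠ 0 := (PadicInt.prime_p).ne_zero

/-- residue class -/
def C (c : ZMod p) : Set ℤ_[p] := PadicInt.toZMod ⁻¹' {c}

lemma C_zero_eq : C p 0 = Set.range ((p : ℤ_[p]) * ·) := by
  ext x
  simp only [C, Set.mem_preimage, Set.mem_singleton_iff, Set.mem_range]
  rw [show (PadicInt.toZMod x = 0) ↔ x ∈ RingHom.ker (PadicInt.toZMod (p := p)) from Iff.rfl.trans (by simp [RingHom.mem_ker]),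
    PadicInt.ker_toZMod, PadicInt.maximalIdeal_eq_span_p, Ideal.mem_span_singleton]
  constructor
  · rintro ⟨y, rfl⟩; exact ⟨y, rfl⟩
  · rintro ⟨y, rfl⟩; exact ⟨y, rfl⟩

lemma measurableSet_C (c : ZMod p) : MeasurableSet (C p c) := by
  have h0 : IsClosed (C p 0) := by
    rw [C_zero_eq]
    have hcont : Continuous ((p : ℤ_[p]) * ·) := continuous_const.mul continuous_id
    exact (hcont.isClosedEmbedding (fun x y h => mul_left_cancel₀ (p_ne_zero p) h)).isClosed_range
  have : C p c = (fun z : ℤ_[p] => z - ((c.val : ℕ) : ℤ_[p])) ⁻¹' (C p 0) := by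
    ext x
    simp [C, sub_eq_zero, ZMod.natCast_val, ZMod.cast_id]
  rw [this]
  exact (h0.measurableSet).preimage ((continuous_id.sub continuous_const).measurable)

lemma meas_C (c : ZMod p) : μZp p (C p c) = μZp p (C p 0) := by
  have : C p 0 = (fun z : ℤ_[p] => ((c.val : ℕ) : ℤ_[p]) + z) ⁻¹' (C p c) := by
    ext x
    simp [C, ZMod.natCast_val, ZMod.cast_id, add_eq_left]
  rw [this, measure_preimage_add]



lemma meas_C_zero : μZp p (C p 0) = (p : ENNReal)⁻¹ := by
  have hcard : Fintype.card (ZMod p) = p := ZMod.card p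
  have hdisj : Pairwise (Function.onFun Disjoint (C p)) := by
    intro c d hcd
    simp only [Function.onFun, C]
    refine Set.disjoint_left.2 fun x hx hx' => hcd ?_
    simp only [Set.mem_preimage, Set.mem_singleton_iff] at hx hx'
    rw [← hx, ← hx']
  have hunion : (⋃ c : ZMod p, C p c) = Set.univ := by
    ext x; simp [C]
  have hsum := measure_iUnion (μ := μZp p) hdisj (fun c => measurableSet_C p c)
  rw [hunion, univ_eq, tsum_fintype] at hsum
  have hconst : ∀ c : ZMod p, μZp p (C p c) = μZp p (C p 0) := meas_C p
  rw [Finset.sum_congr rfl (fun c _ => hconst c), Finset.sum_const, Finset.card_univ,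
    hcard, nsmul_eq_mul] at hsum
  have hp0 : (p : ENNReal) ≠ 0 := Nat.cast_ne_zero.mpr (Fact.out : p.Prime).ne_zero
  calc μZp p (C p 0) = (p : ENNReal)⁻¹ * ((p : ENNReal) * μZp p (C p 0)) := by
        rw [← mul_assoc, ENNReal.inv_mul_cancel hp0 (by simp), one_mul]
    _ = (p : ENNReal)⁻¹ := by rw [← hsum, mul_one]



def S : Set ℤ_[p] := {x : ℤ_[p] | IsSquare x}

lemma isClosed_S : IsClosed (S p) := by
  have : S p = Set.range (fun r : ℤ_[p] => r * r) := by
    ext x; exact ⟨fun ⟨r, h⟩ => ⟨r, h.symm⟩, fun ⟨r, h⟩ => ⟨r, h.symm⟩⟩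
  rw [this]
  exact (isCompact_range (continuous_id.mul continuous_id)).isClosed

lemma toZMod_eq_zero_iff (x : ℤ_[p]) : PadicInt.toZMod x = 0 ↔ (p : ℤ_[p]) ∣ x := by
  rw [show (PadicInt.toZMod x = 0) ↔ x ∈ RingHom.ker (PadicInt.toZMod (p := p)) from
      Iff.rfl.trans (by simp [RingHom.mem_ker]),
    PadicInt.ker_toZMod, PadicInt.maximalIdeal_eq_span_p, Ideal.mem_span_singleton]

lemma norm_eq_one_of_toZMod {x : ℤ_[p]} (h : PadicInt.toZMod x ≠ 0) : ‖x‖ = 1 := by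
  refine le_antisymm (PadicInt.norm_le_one x) (not_lt.1 fun hlt => h ?_)
  rw [toZMod_eq_zero_iff]
  exact (PadicInt.norm_lt_one_iff_dvd x).1 hlt

lemma isSquare_of_toZMod (hp : p ≠ 2) {x : ℤ_[p]} (hx : PadicInt.toZMod x ≠ 0)
    (h : IsSquare (PadicInt.toZMod x)) : IsSquare x := by
  obtain ⟨c, hc⟩ := h
  have hc0 : c ≠ 0 := by
    rintro rfl
    rw [mul_zero] at hc
    exact hx hc
  set a : ℤ_[p] := ((c.val : ℕ) : ℤ_[p]) with ha_def
  have ha : PadicInt.toZMod a = c := by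
    simp [ha_def, ZMod.natCast_val, ZMod.cast_id]
  have hanorm : ‖a‖ = 1 := norm_eq_one_of_toZMod p (by rw [ha]; exact hc0)
  have h2 : ‖(2 : ℤ_[p])‖ = 1 := by
    apply norm_eq_one_of_toZMod
    have h2' : ((2 : ℕ) : ZMod p) ≠ 0 := by
      rw [Ne, ZMod.natCast_eq_zero_iff]
      intro hdvd
      exact hp ((Nat.prime_dvd_prime_iff_eq (Fact.out : p.Prime) Nat.prime_two).1 hdvd)
    rw [show ((2 : ℤ_[p])) = (((2 : ℕ) : ℤ_[p])) by norm_num, map_natCast]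
    exact h2'
  set F : Polynomial ℤ_[p] := Polynomial.X ^ 2 - Polynomial.C x with hF
  have heval : F.eval a = a ^ 2 - x := by simp [hF]
  have hderiv : (Polynomial.derivative F).eval a = 2 * a := by
    simp [hF]
    left; norm_num
  have hsmall : ‖F.eval a‖ < ‖(Polynomial.derivative F).eval a‖ ^ 2 := by
    rw [heval, hderiv, norm_mul, h2, hanorm]
    norm_num
    rw [PadicInt.norm_lt_one_iff_dvd, ← toZMod_eq_zero_iff]
    rw [map_sub, map_pow, ha, hc]
    ring
  obtain ⟨z, hz, -, -, -⟩ := hensels_lemma hsmall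
  refine ⟨z, ?_⟩
  have h0 : z ^ 2 - x = 0 := by simpa [hF] using hz
  linear_combination -h0



lemma meas_range_p : μZp p (Set.range ((p : ℤ_[p]) * ·)) = (p : ENNReal)⁻¹ := by
  rw [← C_zero_eq, meas_C_zero]

/-- the number of nonzero squares mod p -/
noncomputable def nQ : ℕ := Set.ncard {c : ZMod p | c ≠ 0 ∧ IsSquare c}

lemma card_Q (hp : p ≠ 2) : 2 * nQ p = p - 1 := by
  classical
  have hchar : ringChar (ZMod p) ≠ 2 := by rw [ZMod.ringChar_zmod_n]; exact hp
  set χ := quadraticChar (ZMod p) with hχ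
  have hsum : ∑ c : ZMod p, χ c = 0 := quadraticChar_sum_zero hchar
  set s := Finset.univ.filter (fun c : ZMod p => χ c = 1) with hs
  set t := Finset.univ.filter (fun c : ZMod p => ¬χ c = 1) with ht
  have hsplit : ∑ c ∈ s, χ c + ∑ c ∈ t, χ c = ∑ c : ZMod p, χ c :=
    Finset.sum_filter_add_sum_filter_not Finset.univ _ _
  have hss : ∑ c ∈ s, χ c = (s.card : ℤ) := by
    rw [Finset.sum_congr rfl (fun c hc => (Finset.mem_filter.1 hc).2)]
    simp
    rfl
  have h0t : (0 : ZMod p) ∈ t := by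
    simp only [ht, Finset.mem_filter, Finset.mem_univ, true_and]
    simp [hχ]
  have htc : 1 ≤ t.card := Finset.card_pos.2 ⟨0, h0t⟩
  have hts : ∑ c ∈ t, χ c = -((t.card : ℤ) - 1) := by
    rw [← Finset.add_sum_erase _ _ h0t]
    have : ∀ c ∈ t.erase 0, χ c = -1 := by
      intro c hc
      have hc0 : c ≠ 0 := Finset.ne_of_mem_erase hc
      have hct : ¬χ c = 1 := (Finset.mem_filter.1 (Finset.mem_of_mem_erase hc)).2
      rcases quadraticChar_dichotomy hc0 with h | h
      · exact absurd h hct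
      · exact h
    rw [Finset.sum_congr rfl this, Finset.sum_const, Finset.card_erase_of_mem h0t]
    simp only [hχ, quadraticChar_zero, zero_add, nsmul_eq_mul, mul_neg, mul_one]
    push_cast [htc]
    ring
  have hcards : s.card + t.card = p := by
    rw [Finset.card_filter_add_card_filter_not, Finset.card_univ, ZMod.card]
  have hn : nQ p = s.card := by
    have hset : {c : ZMod p | c ≠ 0 ∧ IsSquare c} = (s : Set (ZMod p)) := by
      ext c
      simp only [Set.mem_setOf_eq, hs, Finset.coe_filter, Finset.mem_univ, true_and]
      constructor
      · rintro ⟨h0, hsq⟩; exact (quadraticChar_one_iff_isSquare h0).2 hsq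
      · intro h1
        have h0 : c ≠ 0 := by
          rintro rfl
          rw [hχ, quadraticChar_zero] at h1
          norm_num at h1
        exact ⟨h0, (quadraticChar_one_iff_isSquare h0).1 h1⟩
    rw [nQ, hset, Set.ncard_coe_finset]
  rw [hss, hts, hsum] at hsplit
  omega

lemma S_inter : S p ∩ C p 0 = (((p : ℤ_[p]) * (p : ℤ_[p])) * ·) '' S p := by
  ext x
  constructor
  · rintro ⟨⟨r, rfl⟩, hx0⟩
    have hx0' : PadicInt.toZMod (r * r) = 0 := hx0
    have hdvd : (p : ℤ_[p]) ∣ r * r := (toZMod_eq_zero_iff p _).1 hx0'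
    have hr : (p : ℤ_[p]) ∣ r := (PadicInt.prime_p.dvd_mul.1 hdvd).elim id id
    obtain ⟨w, rfl⟩ := hr
    exact ⟨w * w, ⟨w, rfl⟩, by ring⟩
  · rintro ⟨y, ⟨w, rfl⟩, rfl⟩
    refine ⟨⟨(p : ℤ_[p]) * w, by ring⟩, ?_⟩
    show PadicInt.toZMod _ = 0
    rw [map_mul, map_mul, map_natCast, ZMod.natCast_self]
    ring

lemma meas_S_eq (hp : p ≠ 2) :
    μZp p (S p) = (nQ p : ENNReal) * (p : ENNReal)⁻¹
      + (p : ENNReal)⁻¹ * ((p : ENNReal)⁻¹ * μZp p (S p)) := by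
  classical
  have hsplit : μZp p (S p ∩ C p 0) + μZp p (S p \ C p 0) = μZp p (S p) :=
    measure_inter_add_diff _ (measurableSet_C p 0)
  have hdiff : S p \ C p 0 = PadicInt.toZMod ⁻¹' {c : ZMod p | c ≠ 0 ∧ IsSquare c} := by
    ext x
    simp only [Set.mem_diff, C, Set.mem_preimage, Set.mem_singleton_iff, S, Set.mem_setOf_eq]
    constructor
    · rintro ⟨hsq, h0⟩; exact ⟨h0, hsq.map PadicInt.toZMod⟩
    · rintro ⟨h0, hsq⟩; exact ⟨isSquare_of_toZMod p hp h0 hsq, h0⟩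
  have hQmeas : μZp p (PadicInt.toZMod ⁻¹' {c : ZMod p | c ≠ 0 ∧ IsSquare c})
      = (nQ p : ENNReal) * (p : ENNReal)⁻¹ := by
    set Qs := {c : ZMod p | c ≠ 0 ∧ IsSquare c} with hQs
    have hfin : Qs.Finite := Set.toFinite _
    have hU : PadicInt.toZMod ⁻¹' Qs = ⋃ c ∈ hfin.toFinset, C p c := by
      ext x
      simp [C, hQs, eq_comm]
    have hdisj : (hfin.toFinset : Set (ZMod p)).Pairwise (Function.onFun Disjoint (C p)) := by
      intro c _ d _ hcd
      simp only [Function.onFun, C]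
      refine Set.disjoint_left.2 fun x hx hx' => hcd ?_
      simp only [Set.mem_preimage, Set.mem_singleton_iff] at hx hx'
      rw [← hx, ← hx']
    rw [hU, measure_biUnion_finset hdisj (fun c _ => measurableSet_C p c)]
    rw [Finset.sum_congr rfl (fun c _ => (meas_C p c).trans (meas_C_zero p)),
      Finset.sum_const, nsmul_eq_mul]
    rw [nQ, Set.ncard_eq_toFinset_card Qs hfin]
  have hinter : μZp p (S p ∩ C p 0)
      = (p : ENNReal)⁻¹ * ((p : ENNReal)⁻¹ * μZp p (S p)) := by
    rw [S_inter p]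
    have hcomp : (((p : ℤ_[p]) * (p : ℤ_[p])) * ·) '' S p
        = ((p : ℤ_[p]) * ·) '' (((p : ℤ_[p]) * ·) '' S p) := by
      rw [← Set.image_comp]
      refine congrArg (· '' S p) ?_
      ext z
      simp [Function.comp, mul_assoc]
    rw [hcomp, mul_image p (p_ne_zero p), meas_range_p, mul_image p (p_ne_zero p), meas_range_p]
  conv_lhs => rw [← hsplit]
  rw [hdiff, hQmeas, hinter]
  exact add_comm _ _



lemma meas_T (hp : p ≠ 2) :
    ((μZp p).prod (μZp p)) {x : ℤ_[p] × ℤ_[p] | IsSquare (x.1 * x.2 + 1)}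
      = (p : ENNReal)⁻¹ + μZp p (S p) * (1 - (p : ENNReal)⁻¹) := by
  haveI : Fact (1 < p) := ⟨(Fact.out : p.Prime).one_lt⟩
  have hTdef : {x : ℤ_[p] × ℤ_[p] | IsSquare (x.1 * x.2 + 1)}
      = (fun x : ℤ_[p] × ℤ_[p] => x.1 * x.2 + 1) ⁻¹' (S p) := rfl
  have hTcont : Continuous (fun x : ℤ_[p] × ℤ_[p] => x.1 * x.2 + 1) :=
    (continuous_fst.mul continuous_snd).add continuous_const
  have hT : MeasurableSet {x : ℤ_[p] × ℤ_[p] | IsSquare (x.1 * x.2 + 1)} := by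
    rw [hTdef]
    exact ((isClosed_S p).preimage hTcont).measurableSet
  rw [Measure.prod_apply hT]
  rw [← lintegral_add_compl (fun a => μZp p (Prod.mk a ⁻¹' _)) (measurableSet_C p 0)]
  have h1 : ∫⁻ a in C p 0, μZp p (Prod.mk a ⁻¹' {x : ℤ_[p] × ℤ_[p] | IsSquare (x.1 * x.2 + 1)}) ∂(μZp p)
      = (p : ENNReal)⁻¹ := by
    rw [setLIntegral_congr_fun (measurableSet_C p 0)
      (fun a ha => ?_), setLIntegral_const, one_mul, meas_C_zero]
    have : Prod.mk a ⁻¹' {x : ℤ_[p] × ℤ_[p] | IsSquare (x.1 * x.2 + 1)} = Set.univ := by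
      ext b
      simp only [Set.mem_preimage, Set.mem_setOf_eq, Set.mem_univ, iff_true]
      apply isSquare_of_toZMod p hp
      · rw [map_add, map_mul, ha, zero_mul, zero_add, map_one]
        exact one_ne_zero
      · rw [map_add, map_mul, ha, zero_mul, zero_add, map_one]
        exact IsSquare.one
    rw [this, univ_eq]
  have h2 : ∫⁻ a in (C p 0)ᶜ, μZp p (Prod.mk a ⁻¹' {x : ℤ_[p] × ℤ_[p] | IsSquare (x.1 * x.2 + 1)}) ∂(μZp p)
      = μZp p (S p) * (1 - (p : ENNReal)⁻¹) := by
    rw [setLIntegral_congr_fun (measurableSet_C p 0).compl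
      (fun a ha => ?_), setLIntegral_const,
      measure_compl (measurableSet_C p 0) (measure_ne_top _ _), univ_eq, meas_C_zero]
    -- a is a unit
    have ha' : PadicInt.toZMod a ≠ 0 := ha
    have hunit : IsUnit a := PadicInt.isUnit_iff.2 (norm_eq_one_of_toZMod p ha')
    set u := hunit.unit with hu
    set v : ℤ_[p] := ((u⁻¹ : ℤ_[p]ˣ) : ℤ_[p]) with hv
    have hva : v * a = 1 := by
      rw [hv]
      conv_lhs => rw [show a = (u : ℤ_[p]) from (hunit.unit_spec).symm]
      exact_mod_cast u.inv_mul
    have hv0 : v ≠ 0 := by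
      intro h
      rw [h, zero_mul] at hva
      exact zero_ne_one hva
    set B : Set ℤ_[p] := (fun z : ℤ_[p] => z + 1) ⁻¹' (S p) with hB
    have hpre : Prod.mk a ⁻¹' {x : ℤ_[p] × ℤ_[p] | IsSquare (x.1 * x.2 + 1)} = (v * ·) '' B := by
      ext z
      simp only [Set.mem_preimage, Set.mem_setOf_eq, Set.mem_image, hB]
      constructor
      · intro hz
        exact ⟨a * z, hz, by rw [← mul_assoc, hva, one_mul]⟩
      · rintro ⟨w, hw, rfl⟩
        have : a * (v * w) = w := by
          rw [← mul_assoc, mul_comm a v, hva, one_mul]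
        rwa [this]
    have hrange : Set.range ((v * ·) : ℤ_[p] → ℤ_[p]) = Set.univ := by
      refine Set.eq_univ_of_forall fun y => ⟨a * y, ?_⟩
      simp only
      rw [← mul_assoc, hva, one_mul]
    have hBS : μZp p B = μZp p (S p) := by
      have : B = (fun z : ℤ_[p] => 1 + z) ⁻¹' (S p) := by
        ext z; simp [hB, add_comm]
      rw [this, measure_preimage_add]
    rw [hpre, mul_image p hv0, hrange, univ_eq, one_mul, hBS]
  rw [h1, h2]


end Stmt5

open Stmt5 in
theorem stmt5 (p : ℕ) [Fact p.Prime] (hp : p ≠ 2) :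
    (((μZp p).prod (μZp p)) {x : ℤ_[p] × ℤ_[p] | IsSquare (x.1 * x.2 + 1)}).toReal
      = 1/2 + 1/(p*(p+1)) := by
  have hprime : p.Prime := Fact.out
  have hp2 : 2 ≤ p := hprime.two_le
  have hpR : (0:ℝ) < p := by exact_mod_cast hprime.pos
  have hpR0 : (p:ℝ) ≠ 0 := ne_of_gt hpR
  have hpE0 : (p:ENNReal) ≠ 0 := Nat.cast_ne_zero.mpr hprime.ne_zero
  have hpEinv : (p:ENNReal)⁻¹ ≠ ⊤ := ENNReal.inv_ne_top.2 hpE0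
  have hfin : μZp p (S p) ≠ ⊤ := measure_ne_top _ _
  set m : ℝ := (μZp p (S p)).toReal with hm
  have e1 : m = (nQ p : ℝ) * (p:ℝ)⁻¹ + (p:ℝ)⁻¹ * ((p:ℝ)⁻¹ * m) := by
    have h := congrArg ENNReal.toReal (meas_S_eq p hp)
    rwa [ENNReal.toReal_add (by finiteness) (by finiteness), ENNReal.toReal_mul,
      ENNReal.toReal_mul, ENNReal.toReal_mul, ENNReal.toReal_inv, ENNReal.toReal_natCast] at h
  have e2 : 2 * (nQ p : ℝ) = (p:ℝ) - 1 := by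
    have h := card_Q p hp
    have h' : ((2 * nQ p : ℕ) : ℝ) = ((p - 1 : ℕ) : ℝ) := by rw [h]
    push_cast [Nat.cast_sub (by omega : 1 ≤ p)] at h'
    linarith
  have e3 : (((μZp p).prod (μZp p)) {x : ℤ_[p] × ℤ_[p] | IsSquare (x.1 * x.2 + 1)}).toReal
      = (p:ℝ)⁻¹ + m * (1 - (p:ℝ)⁻¹) := by
    have h := congrArg ENNReal.toReal (meas_T p hp)
    rwa [ENNReal.toReal_add (by finiteness) (by finiteness), ENNReal.toReal_mul,
      ENNReal.toReal_sub_of_le (ENNReal.inv_le_one.2 (by exact_mod_cast Nat.one_le_cast.2 (by omega)))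
        (by finiteness), ENNReal.toReal_inv, ENNReal.toReal_natCast, ENNReal.toReal_one] at h
  rw [e3]
  -- solve for m
  have e1' : m * ((p:ℝ) * p) = (nQ p : ℝ) * p + m := by
    field_simp at e1
    apply mul_left_cancel₀ hpR0
    linear_combination (p:ℝ) * e1
  have hmval : m = (p:ℝ) / (2 * ((p:ℝ) + 1)) := by
    have hpm1 : (p:ℝ) - 1 ≠ 0 :=
      sub_ne_zero.mpr (by exact_mod_cast (show p ≠ 1 by omega))
    have key : (m * (2 * ((p:ℝ) + 1))) * ((p:ℝ) - 1) = (p:ℝ) * ((p:ℝ) - 1) := by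
      nlinarith [e1', e2]
    have := mul_right_cancel₀ hpm1 key
    field_simp
    linarith
  rw [hmval]
  have hp1 : (p:ℝ) + 1 ≠ 0 := by positivity
  field_simp
  ring
end

section
/- Let p be an odd prime, r ∈ ℤ_p with v_p(r) = α > 0, and let β be an even nonnegative integer with β < α. Then the Haar measure of the set of pairs (a,b) ∈ ℤ_p² such that ab + r is a square in ℤ_p and v_p(ab+r) = β equals (β+1)(p-1)²/(2 p^{β+2}). -/
open MeasureTheory PadicInt Polynomial IsLocalRing
open scoped ENNReal

section Aux
variable {p : ℕ} [hp : Fact p.Prime]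


instance : (μZp p).IsAddLeftInvariant := by unfold μZp; infer_instance

lemma muZp_univ : (μZp p) Set.univ = 1 := by
  rw [μZp, ← TopologicalSpace.PositiveCompacts.coe_top, Measure.addHaarMeasure_self]

instance : IsFiniteMeasure (μZp p) :=
  ⟨by rw [muZp_univ]; exact ENNReal.one_lt_top⟩

/-- Fiber of `toZModPow n`. -/
def Cs (p : ℕ) [Fact p.Prime] (n : ℕ) (z : ZMod (p ^ n)) : Set ℤ_[p] :=
  (toZModPow n) ⁻¹' {z}

lemma mem_Cs {n : ℕ} {z : ZMod (p ^ n)} {x : ℤ_[p]} : x ∈ Cs p n z ↔ toZModPow n x = z :=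
  Iff.rfl

lemma toZModPow_natCast_val {n : ℕ} (z : ZMod (p ^ n)) :
    toZModPow n ((z.val : ℤ_[p])) = z := by
  haveI : NeZero (p ^ n) := ⟨pow_ne_zero n hp.out.ne_zero⟩
  rw [map_natCast, ZMod.natCast_zmod_val]

lemma mem_span_iff_toZModPow {n : ℕ} {x : ℤ_[p]} :
    x ∈ (Ideal.span {(p : ℤ_[p]) ^ n} : Ideal ℤ_[p]) ↔ toZModPow n x = 0 := by
  rw [← ker_toZModPow, RingHom.mem_ker]

lemma Cs_eq_ball {n : ℕ} (z : ZMod (p ^ n)) :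
    Cs p n z = {x : ℤ_[p] | ‖x - (z.val : ℤ_[p])‖ ≤ (p : ℝ) ^ (-n : ℤ)} := by
  ext x
  rw [mem_Cs, Set.mem_setOf_eq, norm_le_pow_iff_mem_span_pow, mem_span_iff_toZModPow,
    map_sub, toZModPow_natCast_val, sub_eq_zero]

lemma Cs_measurableSet {n : ℕ} (z : ZMod (p ^ n)) : MeasurableSet (Cs p n z) := by
  rw [Cs_eq_ball]
  have : IsClosed {x : ℤ_[p] | ‖x - (z.val : ℤ_[p])‖ ≤ (p : ℝ) ^ (-n : ℤ)} :=
    isClosed_le (by fun_prop) continuous_const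
  exact this.measurableSet

lemma Cs_translate {n : ℕ} (z : ZMod (p ^ n)) :
    Cs p n z = ((-(z.val : ℤ_[p])) + ·) ⁻¹' (Cs p n 0) := by
  ext x
  simp only [Set.mem_preimage, mem_Cs, neg_add_eq_sub, map_sub, toZModPow_natCast_val,
    sub_eq_zero]

lemma measure_Cs_eq {n : ℕ} (z : ZMod (p ^ n)) : μZp p (Cs p n z) = μZp p (Cs p n 0) := by
  rw [Cs_translate]; exact measure_preimage_add _ _ _

lemma measure_Cs {n : ℕ} (z : ZMod (p ^ n)) :
    μZp p (Cs p n z) = ((p : ℝ≥0∞) ^ n)⁻¹ := by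
  haveI : NeZero (p ^ n) := ⟨pow_ne_zero n hp.out.ne_zero⟩
  have hdisj : Pairwise (Function.onFun Disjoint fun (w : ZMod (p ^ n)) => Cs p n w) := by
    intro w w' hww'
    simp only [Function.onFun, Set.disjoint_left]
    intro x hx hx'
    exact hww' (hx.symm.trans hx')
  have hunion : (⋃ w : ZMod (p ^ n), Cs p n w) = Set.univ := by
    ext x; simp [mem_Cs]
  have h1 : (1 : ℝ≥0∞) = ∑' w : ZMod (p ^ n), μZp p (Cs p n w) := by
    rw [← muZp_univ (p := p), ← hunion, measure_iUnion hdisj fun w => Cs_measurableSet w]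
  rw [tsum_fintype] at h1
  have h2 : (1 : ℝ≥0∞) = (Fintype.card (ZMod (p ^ n))) * μZp p (Cs p n 0) := by
    rw [h1]
    rw [Finset.sum_congr rfl fun w _ => measure_Cs_eq w]
    simp [Finset.sum_const, mul_comm]
  have hcard : (Fintype.card (ZMod (p ^ n)) : ℝ≥0∞) = (p : ℝ≥0∞) ^ n := by
    rw [ZMod.card]; push_cast; ring
  rw [hcard] at h2
  have hne : ((p : ℝ≥0∞) ^ n) ≠ 0 :=
    pow_ne_zero n (by exact_mod_cast hp.out.ne_zero)
  have hnetop : ((p : ℝ≥0∞) ^ n) ≠ ⊤ := by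
    exact ENNReal.pow_ne_top (ENNReal.natCast_ne_top p)
  rw [measure_Cs_eq z, ← one_mul (μZp p (Cs p n 0)), ← ENNReal.inv_mul_cancel hne hnetop,
    mul_assoc, ← h2, mul_one]

lemma measure_singleton (x : ℤ_[p]) : μZp p {x} = 0 := by
  have h : ∀ n : ℕ, μZp p {x} ≤ ((p : ℝ≥0∞)⁻¹) ^ n := by
    intro n
    rw [← ENNReal.inv_pow]
    rw [← measure_Cs (p := p) (toZModPow n x)]
    exact measure_mono (by intro y hy; rw [Set.mem_singleton_iff] at hy; subst hy; rfl)
  have htend : Filter.Tendsto (fun n : ℕ => ((p : ℝ≥0∞)⁻¹) ^ n) Filter.atTop (nhds 0) :=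
    ENNReal.tendsto_pow_atTop_nhds_zero_of_lt_one
      (ENNReal.inv_lt_one.mpr (by exact_mod_cast hp.out.one_lt))
  exact le_antisymm (ge_of_tendsto' htend h) (by simp)



lemma norm_eq_one_of_toZMod_ne {u : ℤ_[p]} (h : toZMod u ≠ 0) : ‖u‖ = 1 := by
  have h1 : u ∉ maximalIdeal ℤ_[p] := by
    rw [← ker_toZMod, RingHom.mem_ker] at *; exact h
  rw [maximalIdeal_eq_span_p] at h1
  have h2 : ¬ ‖u‖ ≤ (p : ℝ) ^ (-(1:ℕ) : ℤ) := by
    rw [norm_le_pow_iff_mem_span_pow, pow_one]; exact h1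
  refine le_antisymm (norm_le_one u) ?_
  by_contra hlt
  push_neg at hlt
  apply h2
  have := (norm_le_pow_iff_norm_lt_pow_add_one u (-(1:ℕ) : ℤ)).2
  apply this
  simpa using hlt

lemma toZMod_ne_zero_of_norm_one {u : ℤ_[p]} (h : ‖u‖ = 1) : toZMod u ≠ 0 := by
  intro h0
  have h1 : u ∈ maximalIdeal ℤ_[p] := by rw [← ker_toZMod, RingHom.mem_ker]; exact h0
  rw [maximalIdeal_eq_span_p] at h1
  have h2 : ‖u‖ ≤ (p : ℝ) ^ (-(1:ℕ) : ℤ) := by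
    rw [norm_le_pow_iff_mem_span_pow, pow_one]; exact h1
  rw [h] at h2
  have : (p : ℝ) ^ (-(1:ℕ) : ℤ) < 1 := by
    apply zpow_lt_one_of_neg₀ (by exact_mod_cast hp.out.one_lt) (by norm_num)
  linarith

lemma isSquare_unit_iff (hp2 : p ≠ 2) {u : ℤ_[p]} (hu : ‖u‖ = 1) :
    IsSquare u ↔ IsSquare (toZMod u) := by
  constructor
  · exact fun h => h.map (toZMod (p := p))
  · rintro ⟨t, ht⟩
    have htne : t ≠ 0 := by
      intro h0
      rw [h0, mul_zero] at ht
      exact toZMod_ne_zero_of_norm_one hu ht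
    set c : ℤ_[p] := ((t.val : ℕ) : ℤ_[p]) with hc
    have hct : toZMod c = t := by
      rw [hc, map_natCast, ZMod.natCast_zmod_val]
    have hcnorm : ‖c‖ = 1 := norm_eq_one_of_toZMod_ne (by rw [hct]; exact htne)
    -- Hensel
    set F : Polynomial ℤ_[p] := X ^ 2 - C u with hF
    have hevalc : F.eval c = c ^ 2 - u := by simp [hF]
    have hderiv : F.derivative.eval c = 2 * c := by
      simp [hF]
      exact Or.inl one_add_one_eq_two
    have h2norm : ‖(2 : ℤ_[p])‖ = 1 := by
      have : ¬ ((p : ℤ) ∣ (2 : ℤ)) := by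
        intro hdvd
        have h2 : (p : ℤ) ∣ (2 : ℕ) := by exact_mod_cast hdvd
        rw [Int.natCast_dvd_natCast] at h2
        have := (Nat.prime_dvd_prime_iff_eq hp.out Nat.prime_two).mp h2
        exact hp2 this
      have hlt := (norm_int_lt_one_iff_dvd (2 : ℤ)).not.2 this
      push_neg at hlt
      refine le_antisymm ?_ (by exact_mod_cast hlt)
      exact_mod_cast norm_le_one ((2 : ℤ) : ℤ_[p])
    have hker : toZMod (c ^ 2 - u) = 0 := by
      rw [map_sub, map_pow, hct, ht]; ring
    have hsmall : ‖c ^ 2 - u‖ ≤ (p : ℝ) ^ (-(1:ℕ) : ℤ) := by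
      rw [norm_le_pow_iff_mem_span_pow, pow_one]
      rw [← maximalIdeal_eq_span_p, ← ker_toZMod, RingHom.mem_ker]
      exact hker
    have hlt1 : ‖F.eval c‖ < ‖F.derivative.eval c‖ ^ 2 := by
      rw [hevalc, hderiv, norm_mul, h2norm, hcnorm, one_mul, one_pow]
      calc ‖c ^ 2 - u‖ ≤ (p : ℝ) ^ (-(1:ℕ) : ℤ) := hsmall
        _ < 1 := zpow_lt_one_of_neg₀ (by exact_mod_cast hp.out.one_lt) (by norm_num)
    obtain ⟨z, hz, -⟩ := hensels_lemma (F := F) (a := c) (by rw [coe_aeval_eq_eval]; exact hlt1)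
    have : u = z * z := by
      have hzz : F.eval z = z ^ 2 - u := by simp [hF]
      rw [coe_aeval_eq_eval, hzz] at hz
      have := sub_eq_zero.mp hz
      rw [← this]; ring
    exact ⟨z, this⟩



lemma padic_p_ne_zero : ((p : ℕ) : ℤ_[p]) ≠ 0 := by
  intro h
  have h1 : ‖((p:ℕ) : ℤ_[p])‖ = (p:ℝ)⁻¹ := PadicInt.norm_p
  rw [h, norm_zero] at h1
  have h2 : (0:ℝ) < (p:ℝ)⁻¹ := by
    have : (0:ℝ) < p := by exact_mod_cast hp.out.pos
    positivity
  linarith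

lemma val_eq_of_norm_eq_pow {x : ℤ_[p]} (hx : x ≠ 0) {n : ℤ}
    (h : ‖x‖ = (p : ℝ) ^ (-n)) : (x.valuation : ℤ) = n := by
  have h1 : (1:ℝ) < p := by exact_mod_cast hp.out.one_lt
  have := norm_eq_zpow_neg_valuation hx
  rw [h] at this
  have := (zpow_right_strictMono₀ h1).injective this.symm
  omega

lemma val_eq_zero_of_norm_one {w : ℤ_[p]} (h : ‖w‖ = 1) : w.valuation = 0 := by
  have hw : w ≠ 0 := by intro h0; rw [h0, norm_zero] at h; norm_num at h
  have := val_eq_of_norm_eq_pow hw (n := 0) (by simpa using h)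
  omega

lemma norm_pow_mul_unit {n : ℕ} {w : ℤ_[p]} (hw : ‖w‖ = 1) :
    ‖(p : ℤ_[p]) ^ n * w‖ = (p : ℝ) ^ (-(n:ℤ)) := by
  rw [norm_mul, hw, mul_one, PadicInt.norm_p_pow]

lemma pow_mul_unit_ne_zero {n : ℕ} {w : ℤ_[p]} (hw : ‖w‖ = 1) :
    (p : ℤ_[p]) ^ n * w ≠ 0 := by
  intro h
  have := congrArg (fun x : ℤ_[p] => ‖x‖) h
  rw [norm_pow_mul_unit hw] at this
  simp only [norm_zero] at this
  have hpos : (0:ℝ) < (p : ℝ) ^ (-(n:ℤ)) :=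
    zpow_pos (by exact_mod_cast hp.out.pos) _
  linarith

lemma val_pow_mul_unit {n : ℕ} {w : ℤ_[p]} (hw : ‖w‖ = 1) :
    ((p : ℤ_[p]) ^ n * w).valuation = n :=
  by exact_mod_cast val_eq_of_norm_eq_pow (pow_mul_unit_ne_zero (n := n) hw) (norm_pow_mul_unit hw)

lemma isSquare_pow_mul_iff {β : ℕ} (hβ : Even β) {w : ℤ_[p]} (hw : ‖w‖ = 1) :
    IsSquare ((p : ℤ_[p]) ^ β * w) ↔ IsSquare w := by
  obtain ⟨m, hm⟩ := hβ
  constructor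
  · rintro ⟨s, hs⟩
    have hw0 : w ≠ 0 := by intro h0; rw [h0, norm_zero] at hw; norm_num at hw
    have hs0 : s ≠ 0 := by
      intro h0
      rw [h0, mul_zero] at hs
      exact pow_mul_unit_ne_zero hw hs
    have hnorm : ‖s‖ * ‖s‖ = (p:ℝ) ^ (-(m:ℤ)) * ((p:ℝ) ^ (-(m:ℤ))) := by
      rw [← norm_mul, ← hs, norm_pow_mul_unit hw, ← zpow_add₀
        (by exact_mod_cast hp.out.ne_zero : (p:ℝ) ≠ 0)]
      congr 1
      omega
    have hsnorm : ‖s‖ = (p:ℝ) ^ (-(m:ℤ)) :=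
      (mul_self_inj (norm_nonneg s) (le_of_lt (zpow_pos (by exact_mod_cast hp.out.pos) _))).mp
        hnorm
    have hsval : s.valuation = m := by exact_mod_cast val_eq_of_norm_eq_pow hs0 hsnorm
    have hspec := unitCoeff_spec hs0
    rw [hsval] at hspec
    set us := (unitCoeff hs0 : ℤ_[p])
    have : (p : ℤ_[p]) ^ β * w = (p : ℤ_[p]) ^ β * (us * us) := by
      rw [hs, hspec, hm]; ring
    have hw_eq : w = us * us := mul_left_cancel₀ (pow_ne_zero _ padic_p_ne_zero) this
    exact ⟨us, hw_eq⟩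
  · rintro ⟨t, ht⟩
    exact ⟨(p : ℤ_[p]) ^ m * t, by rw [ht, hm]; ring⟩



variable {p : ℕ} [hp : Fact p.Prime]

/-- The set of `a = p^i u` with `u` a unit reducing to `c` mod `p`. -/
def Bset (p : ℕ) [Fact p.Prime] (i : ℕ) (c : ZMod p) : Set ℤ_[p] :=
  {a | ∃ u : ℤ_[p], ‖u‖ = 1 ∧ toZMod u = c ∧ a = (p : ℤ_[p]) ^ i * u}

lemma mem_span_p_iff_toZMod {x : ℤ_[p]} :
    x ∈ (Ideal.span {(p : ℤ_[p])} : Ideal ℤ_[p]) ↔ toZMod x = 0 := by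
  rw [← maximalIdeal_eq_span_p, ← ker_toZMod, RingHom.mem_ker]

lemma Bset_eq_Cs {i : ℕ} {c : ZMod p} (hc : c ≠ 0) :
    Bset p i c = Cs p (i + 1) (toZModPow (i + 1) ((p : ℤ_[p]) ^ i * ((c.val : ℕ) : ℤ_[p]))) := by
  have hNZ : NeZero p := ⟨hp.out.ne_zero⟩
  set e : ℤ_[p] := (p : ℤ_[p]) ^ i * ((c.val : ℕ) : ℤ_[p]) with he
  ext a
  rw [mem_Cs]
  constructor
  · rintro ⟨u, hu, huc, rfl⟩
    have h1 : u - ((c.val : ℕ) : ℤ_[p]) ∈ (Ideal.span {(p : ℤ_[p])} : Ideal ℤ_[p]) := by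
      rw [mem_span_p_iff_toZMod, map_sub, huc, map_natCast, ZMod.natCast_zmod_val, sub_self]
    obtain ⟨t, ht⟩ := Ideal.mem_span_singleton.mp h1
    have h2 : (p:ℤ_[p]) ^ i * u - e = (p:ℤ_[p]) ^ (i+1) * t := by
      rw [he]
      have : u = ((c.val : ℕ) : ℤ_[p]) + (p:ℤ_[p]) * t := by
        rw [← ht]; ring
      rw [this]; ring
    have h3 : toZModPow (i+1) ((p:ℤ_[p]) ^ i * u - e) = 0 := by
      rw [← mem_span_iff_toZModPow]
      exact Ideal.mem_span_singleton.mpr ⟨t, h2⟩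
    rw [map_sub, sub_eq_zero] at h3
    exact h3
  · intro h
    have h3 : toZModPow (i+1) (a - e) = 0 := by rw [map_sub, h, sub_self]
    rw [← mem_span_iff_toZModPow] at h3
    obtain ⟨t, ht⟩ := Ideal.mem_span_singleton.mp h3
    set u : ℤ_[p] := ((c.val : ℕ) : ℤ_[p]) + (p:ℤ_[p]) * t with hu
    have ha : a = (p:ℤ_[p]) ^ i * u := by
      have : a = e + (p:ℤ_[p])^(i+1) * t := by rw [← ht]; ring
      rw [this, he, hu]; ring
    have huc : toZMod u = c := by
      rw [hu, map_add, map_mul, map_natCast, map_natCast, ZMod.natCast_zmod_val,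
        ZMod.natCast_self, zero_mul, add_zero]
    exact ⟨u, norm_eq_one_of_toZMod_ne (by rw [huc]; exact hc), huc, ha⟩

lemma Bset_measurableSet {i : ℕ} {c : ZMod p} (hc : c ≠ 0) : MeasurableSet (Bset p i c) := by
  rw [Bset_eq_Cs hc]; exact Cs_measurableSet _

lemma measure_Bset {i : ℕ} {c : ZMod p} (hc : c ≠ 0) :
    μZp p (Bset p i c) = ((p : ℝ≥0∞) ^ (i + 1))⁻¹ := by
  rw [Bset_eq_Cs hc, measure_Cs]

lemma Bset_eq_of_mem {i i' : ℕ} {c c' : ZMod p} {a : ℤ_[p]}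
    (h : a ∈ Bset p i c) (h' : a ∈ Bset p i' c') : i = i' ∧ c = c' := by
  obtain ⟨u, hu, huc, rfl⟩ := h
  obtain ⟨u', hu', huc', heq⟩ := h'
  have hnorm : (p:ℝ) ^ (-(i:ℤ)) = (p:ℝ) ^ (-(i':ℤ)) := by
    rw [← norm_pow_mul_unit hu (p := p), ← norm_pow_mul_unit hu' (p := p), heq]
  have h1 : (1:ℝ) < p := by exact_mod_cast hp.out.one_lt
  have hii : i = i' := by
    have := (zpow_right_strictMono₀ h1).injective hnorm
    omega
  subst hii
  have huu : u = u' := mul_left_cancel₀ (pow_ne_zero _ padic_p_ne_zero) heq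
  exact ⟨rfl, by rw [← huc, ← huc', huu]⟩
end Aux

section Count
variable {p : ℕ} [hp : Fact p.Prime]

open Finset in
lemma two_mul_card_sq (hp2 : p ≠ 2) :
    2 * Fintype.card {e : ZMod p // e ≠ 0 ∧ IsSquare e} = p - 1 := by
  classical
  haveI : NeZero p := ⟨hp.out.ne_zero⟩
  have hchar : ringChar (ZMod p) ≠ 2 := by
    rw [ZMod.ringChar_zmod_n]; exact hp2
  have h0 : ∑ a : ZMod p, quadraticChar (ZMod p) a = 0 := quadraticChar_sum_zero hchar
  set s : Finset (ZMod p) := univ.filter (fun a => a ≠ 0) with hs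
  have h1 : ∑ a ∈ s, quadraticChar (ZMod p) a = 0 := by
    rw [hs, Finset.sum_filter_of_ne (fun x _ hx => by
      intro h0x; rw [h0x, quadraticChar_zero] at hx; exact hx rfl)]
    exact h0
  have h2 : ∑ a ∈ s.filter IsSquare, quadraticChar (ZMod p) a
      + ∑ a ∈ s.filter (fun a => ¬ IsSquare a), quadraticChar (ZMod p) a
      = ∑ a ∈ s, quadraticChar (ZMod p) a := Finset.sum_filter_add_sum_filter_not s _ _
  have h3 : ∑ a ∈ s.filter IsSquare, quadraticChar (ZMod p) a
      = (s.filter IsSquare).card := by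
    rw [Finset.sum_congr rfl (fun a ha => ?_), Finset.sum_const, nsmul_eq_mul, mul_one]
    rw [Finset.mem_filter, hs, Finset.mem_filter] at ha
    exact (quadraticChar_one_iff_isSquare ha.1.2).mpr ha.2
  have h4 : ∑ a ∈ s.filter (fun a => ¬ IsSquare a), quadraticChar (ZMod p) a
      = -(s.filter (fun a => ¬ IsSquare a)).card := by
    rw [Finset.sum_congr rfl (fun a ha => ?_), Finset.sum_const, nsmul_eq_mul, mul_neg, mul_one]
    rw [Finset.mem_filter] at ha
    exact quadraticChar_neg_one_iff_not_isSquare.mpr ha.2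
  have h5 : ((s.filter IsSquare).card : ℤ) = (s.filter (fun a => ¬ IsSquare a)).card := by
    rw [h3, h4, h1] at h2; linarith
  have h6 : (s.filter IsSquare).card + (s.filter (fun a => ¬ IsSquare a)).card = s.card :=
    Finset.card_filter_add_card_filter_not _
  have h7 : s.card = p - 1 := by
    have : s = Finset.univ.erase (0 : ZMod p) := by
      rw [hs]
      ext a
      simp [Finset.mem_erase]
    rw [this, Finset.card_erase_of_mem (Finset.mem_univ 0), Finset.card_univ, ZMod.card]
  have h8 : Fintype.card {e : ZMod p // e ≠ 0 ∧ IsSquare e} = (s.filter IsSquare).card := by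
    rw [Fintype.card_subtype, hs, Finset.filter_filter]
  omega

lemma two_mul_card_pairs (hp2 : p ≠ 2) :
    2 * Fintype.card {cd : ZMod p × ZMod p //
        cd.1 ≠ 0 ∧ cd.2 ≠ 0 ∧ IsSquare (cd.1 * cd.2)} = (p - 1) ^ 2 := by
  classical
  haveI : NeZero p := ⟨hp.out.ne_zero⟩
  have e1 : {cd : ZMod p × ZMod p // cd.1 ≠ 0 ∧ cd.2 ≠ 0 ∧ IsSquare (cd.1 * cd.2)}
      ≃ {cd : ZMod p × ZMod p // cd.1 ≠ 0 ∧ cd.2 ≠ 0 ∧ IsSquare cd.2} :=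
    { toFun := fun x => ⟨(x.1.1, x.1.1 * x.1.2),
        ⟨x.2.1, mul_ne_zero x.2.1 x.2.2.1, x.2.2.2⟩⟩
      invFun := fun y => ⟨(y.1.1, y.1.1⁻¹ * y.1.2),
        ⟨y.2.1, mul_ne_zero (inv_ne_zero y.2.1) y.2.2.1, by
          have := y.2.2.2
          rwa [mul_inv_cancel_left₀ y.2.1]⟩⟩
      left_inv := fun x => by
        apply Subtype.ext
        exact Prod.ext rfl (inv_mul_cancel_left₀ x.2.1 x.1.2)
      right_inv := fun y => by
        apply Subtype.ext
        exact Prod.ext rfl (mul_inv_cancel_left₀ y.2.1 y.1.2) }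
  have e2 : {cd : ZMod p × ZMod p // cd.1 ≠ 0 ∧ cd.2 ≠ 0 ∧ IsSquare cd.2}
      ≃ {c : ZMod p // c ≠ 0} × {e : ZMod p // e ≠ 0 ∧ IsSquare e} :=
    { toFun := fun x => (⟨x.1.1, x.2.1⟩, ⟨x.1.2, x.2.2⟩)
      invFun := fun y => ⟨(y.1.1, y.2.1), ⟨y.1.2, y.2.2⟩⟩
      left_inv := fun x => rfl
      right_inv := fun y => rfl }
  rw [Fintype.card_congr (e1.trans e2), Fintype.card_prod]
  have hc1 : Fintype.card {c : ZMod p // c ≠ 0} = p - 1 := by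
    rw [Fintype.card_subtype_compl, Fintype.card_subtype_eq, ZMod.card]
  rw [hc1, sq]
  rw [show 2 * ((p-1) * Fintype.card {e : ZMod p // e ≠ 0 ∧ IsSquare e})
      = (p-1) * (2 * Fintype.card {e : ZMod p // e ≠ 0 ∧ IsSquare e}) by ring,
    two_mul_card_sq hp2]

end Count

section Main
variable {p : ℕ} [hp : Fact p.Prime]

lemma toZMod_p_eq_zero : toZMod ((p : ℕ) : ℤ_[p]) = 0 := by
  rw [map_natCast, ZMod.natCast_self]

theorem stmt7' (hp2 : p ≠ 2) (r : ℤ_[p]) (α : ℕ) (hα : 0 < α)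
    (hr : r.valuation = α) (β : ℕ) (hβeven : Even β) (hβ : β < α) :
    (((μZp p).prod (μZp p)) {x : ℤ_[p] × ℤ_[p] |
        IsSquare (x.1 * x.2 + r) ∧ (x.1 * x.2 + r).valuation = β}).toReal
      = ((β:ℝ) + 1) * ((p:ℝ) - 1)^2 / (2 * (p:ℝ) ^ (β + 2)) := by
  classical
  have h1R : (1:ℝ) < p := by exact_mod_cast hp.out.one_lt
  -- r ≠ 0 and its decomposition
  have hr0 : r ≠ 0 := by
    intro h; rw [h, PadicInt.valuation_zero] at hr; omega
  set r' : ℤ_[p] := (unitCoeff hr0 : ℤ_[p]) * (p : ℤ_[p]) ^ (α - (β + 1)) with hr'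
  have hrdec : r = (p : ℤ_[p]) ^ (β + 1) * r' := by
    have hspec := unitCoeff_spec hr0
    rw [hr] at hspec
    have hpow : (p : ℤ_[p]) ^ α = (p : ℤ_[p]) ^ (β + 1) * (p : ℤ_[p]) ^ (α - (β + 1)) := by
      rw [← pow_add]
      congr 1
      omega
    rw [hspec, hr', hpow]
    ring
  set T : Set (ℤ_[p] × ℤ_[p]) := {x : ℤ_[p] × ℤ_[p] |
      IsSquare (x.1 * x.2 + r) ∧ (x.1 * x.2 + r).valuation = β} with hT
  set Q : ZMod p × ZMod p → Prop :=
    fun cd => cd.1 ≠ 0 ∧ cd.2 ≠ 0 ∧ IsSquare (cd.1 * cd.2) with hQ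
  set ι := {t : Fin (β + 1) × (ZMod p × ZMod p) // Q t.2} with hι
  set Rect : ι → Set (ℤ_[p] × ℤ_[p]) :=
    fun t => Bset p t.1.1 t.1.2.1 ×ˢ Bset p (β - t.1.1) t.1.2.2 with hRect
  set U : Set (ℤ_[p] × ℤ_[p]) := ⋃ t : ι, Rect t with hU
  set Z : Set (ℤ_[p] × ℤ_[p]) := {x | x.1 * x.2 + r = 0} with hZ
  -- (i) U ⊆ T
  have hUT : U ⊆ T := by
    rintro ⟨a, b⟩ hx
    rw [hU, Set.mem_iUnion] at hx
    obtain ⟨⟨⟨i, c, d⟩, hq⟩, hmem⟩ := hx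
    obtain ⟨hc, hd, hcd⟩ := hq
    rw [hRect] at hmem
    obtain ⟨hma, hmb⟩ := hmem
    dsimp only at hma hmb hc hd hcd
    obtain ⟨u, hu, huc, hae⟩ := hma
    obtain ⟨v, hv, hvd, hbe⟩ := hmb
    subst hae
    subst hbe
    set w : ℤ_[p] := u * v + (p : ℤ_[p]) * r' with hw
    have hiβ : (i : ℕ) + (β - (i : ℕ)) = β := by omega
    have hpow2 : (p : ℤ_[p]) ^ (i:ℕ) * (p : ℤ_[p]) ^ (β - (i:ℕ)) = (p : ℤ_[p]) ^ β := by
      rw [← pow_add, hiβ]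
    have hab : (p : ℤ_[p]) ^ (i:ℕ) * u * ((p : ℤ_[p]) ^ (β - (i:ℕ)) * v) + r
        = (p : ℤ_[p]) ^ β * w := by
      have h1 : (p : ℤ_[p]) ^ (i:ℕ) * u * ((p : ℤ_[p]) ^ (β - (i:ℕ)) * v)
          = (p : ℤ_[p]) ^ β * (u * v) := by rw [← hpow2]; ring
      rw [hrdec, h1, hw]
      ring
    have hwz : toZMod w = c * d := by
      rw [hw, map_add, map_mul, map_mul, huc, hvd, toZMod_p_eq_zero, zero_mul, add_zero]
    have hwnorm : ‖w‖ = 1 := norm_eq_one_of_toZMod_ne (by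
      rw [hwz]; exact mul_ne_zero hc hd)
    refine ⟨?_, ?_⟩
    · show IsSquare ((p : ℤ_[p]) ^ (i:ℕ) * u * ((p : ℤ_[p]) ^ (β - (i:ℕ)) * v) + r)
      rw [hab]
      exact (isSquare_pow_mul_iff hβeven hwnorm).mpr
        ((isSquare_unit_iff hp2 hwnorm).mpr (by rw [hwz]; exact hcd))
    · show ((p : ℤ_[p]) ^ (i:ℕ) * u * ((p : ℤ_[p]) ^ (β - (i:ℕ)) * v) + r).valuation = β
      rw [hab, val_pow_mul_unit hwnorm]
  -- (ii) T ⊆ U ∪ Z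
  have hTUZ : T ⊆ U ∪ Z := by
    rintro ⟨a, b⟩ ⟨hsq, hval⟩
    rcases eq_or_ne (a * b + r) 0 with hy0 | hy0
    · exact Or.inr hy0
    left
    have hynorm : ‖a * b + r‖ = (p:ℝ) ^ (-(β:ℤ)) := by
      rw [norm_eq_zpow_neg_valuation hy0, hval]
    have hrnorm : ‖r‖ = (p:ℝ) ^ (-(α:ℤ)) := by rw [norm_eq_zpow_neg_valuation hr0, hr]
    have hrlt : ‖r‖ < ‖a * b + r‖ := by
      rw [hynorm, hrnorm]
      exact (zpow_right_strictMono₀ h1R) (by omega)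
    have habnorm : ‖a * b‖ = (p:ℝ) ^ (-(β:ℤ)) := by
      have : a * b = (a * b + r) + (-r) := by ring
      rw [this, PadicInt.norm_add_eq_max_of_ne (by rw [norm_neg]; exact (ne_of_lt hrlt).symm),
        norm_neg, max_eq_left hrlt.le, hynorm]
    have hab0 : a * b ≠ 0 := by
      intro h
      rw [h, norm_zero] at habnorm
      have := zpow_pos (by linarith : (0:ℝ) < p) (-(β:ℤ))
      linarith
    have ha0 : a ≠ 0 := fun h => hab0 (by rw [h, zero_mul])
    have hb0 : b ≠ 0 := fun h => hab0 (by rw [h, mul_zero])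
    set ia := a.valuation with hia
    set jb := b.valuation with hjb
    have haspec : a = (p : ℤ_[p]) ^ ia * (unitCoeff ha0 : ℤ_[p]) := by
      rw [mul_comm]; exact unitCoeff_spec ha0
    have hbspec : b = (p : ℤ_[p]) ^ jb * (unitCoeff hb0 : ℤ_[p]) := by
      rw [mul_comm]; exact unitCoeff_spec hb0
    set ua := (unitCoeff ha0 : ℤ_[p])
    set ub := (unitCoeff hb0 : ℤ_[p])
    have huab : ‖ua * ub‖ = 1 := by rw [norm_mul, norm_units, norm_units, mul_one]
    have habdec : a * b = (p : ℤ_[p]) ^ (ia + jb) * (ua * ub) := by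
      rw [haspec, hbspec, pow_add]; ring
    have hiajb : ia + jb = β := by
      rw [habdec, norm_pow_mul_unit huab] at habnorm
      have := (zpow_right_strictMono₀ h1R).injective habnorm
      omega
    set w' : ℤ_[p] := ua * ub + (p : ℤ_[p]) * r' with hw'
    have hydec : a * b + r = (p : ℤ_[p]) ^ β * w' := by
      rw [habdec, hiajb, hrdec, hw']; ring
    have hw'0 : w' ≠ 0 := by
      intro h
      rw [hydec, h, mul_zero] at hy0
      exact hy0 rfl
    have hw'val : w'.valuation = 0 := by
      have := hval
      rw [hydec, valuation_p_pow_mul β w' hw'0] at this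
      omega
    have hw'norm : ‖w'‖ = 1 := by
      rw [norm_eq_zpow_neg_valuation hw'0, hw'val]; norm_num
    have hsq' : IsSquare (toZMod w') := by
      rw [hydec] at hsq
      exact ((isSquare_unit_iff hp2 hw'norm).mp
        ((isSquare_pow_mul_iff hβeven hw'norm).mp hsq))
    set ca := toZMod ua with hca
    set da := toZMod ub with hda
    have hcdw : toZMod w' = ca * da := by
      rw [hw', map_add, map_mul, map_mul, toZMod_p_eq_zero, zero_mul, add_zero]
    have hcne : ca ≠ 0 := toZMod_ne_zero_of_norm_one (norm_units _)
    have hdne : da ≠ 0 := toZMod_ne_zero_of_norm_one (norm_units _)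
    have hQcd : Q (ca, da) := ⟨hcne, hdne, by rw [← hcdw]; exact hsq'⟩
    have hiale : ia ≤ β := by omega
    rw [hU, Set.mem_iUnion]
    refine ⟨⟨(⟨ia, by omega⟩, (ca, da)), hQcd⟩, ?_⟩
    rw [hRect]
    refine ⟨?_, ?_⟩
    · exact ⟨ua, norm_units _, rfl, haspec⟩
    · refine ⟨ub, norm_units _, rfl, ?_⟩
      show b = (p : ℤ_[p]) ^ (β - ia) * ub
      rw [show β - ia = jb by omega]
      exact hbspec
  -- (iii) Z is null
  have hZmeas : MeasurableSet Z := by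
    have hcont : Continuous (fun x : ℤ_[p] × ℤ_[p] => x.1 * x.2 + r) :=
      (continuous_fst.mul continuous_snd).add continuous_const
    exact hcont.measurable (MeasurableSet.singleton 0)
  have hZnull : ((μZp p).prod (μZp p)) Z = 0 := by
    rw [Measure.prod_apply hZmeas]
    have hslice : ∀ a : ℤ_[p], μZp p (Prod.mk a ⁻¹' Z) = 0 := by
      intro a
      rcases eq_or_ne a 0 with rfl | ha
      · have : Prod.mk (0:ℤ_[p]) ⁻¹' Z = ∅ := by
          ext b; simp [hZ, hr0]
        rw [this, measure_empty]
      · have hsub : (Prod.mk a ⁻¹' Z).Subsingleton := by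
          intro b1 h1 b2 h2
          simp only [hZ, Set.mem_preimage, Set.mem_setOf_eq] at h1 h2
          have : a * b1 = a * b2 := by linear_combination h1 - h2
          exact mul_left_cancel₀ ha this
        rcases Set.eq_empty_or_nonempty (Prod.mk a ⁻¹' Z) with he | ⟨b0, hb0⟩
        · rw [he, measure_empty]
        · have : Prod.mk a ⁻¹' Z ⊆ {b0} := fun b hb => hsub hb hb0
          exact measure_mono_null this (measure_singleton b0)
    simp only [hslice, lintegral_const, zero_mul]
  -- measure of U
  have hRmeas : ∀ t : ι, MeasurableSet (Rect t) := by
    rintro ⟨⟨i, c, d⟩, hc, hd, hcd⟩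
    exact (Bset_measurableSet hc).prod (Bset_measurableSet hd)
  have hRdisj : Pairwise (Function.onFun Disjoint Rect) := by
    rintro ⟨⟨i, c, d⟩, hq⟩ ⟨⟨i', c', d'⟩, hq'⟩ hne
    rw [Function.onFun, Set.disjoint_left]
    rintro ⟨a, b⟩ ⟨hma, hmb⟩ ⟨hma', hmb'⟩
    obtain ⟨hii, hcc⟩ := Bset_eq_of_mem hma hma'
    obtain ⟨-, hdd⟩ := Bset_eq_of_mem hmb hmb'
    exact hne (Subtype.ext (Prod.ext (Fin.ext hii) (Prod.ext hcc hdd)))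
  have hRectval : ∀ t : ι, ((μZp p).prod (μZp p)) (Rect t) = ((p : ℝ≥0∞) ^ (β + 2))⁻¹ := by
    rintro ⟨⟨i, c, d⟩, hc, hd, hcd⟩
    rw [hRect]
    show ((μZp p).prod (μZp p)) (Bset p i c ×ˢ Bset p (β - i) d) = _
    rw [Measure.prod_prod, measure_Bset hc, measure_Bset hd,
      ← ENNReal.mul_inv (Or.inl (pow_ne_zero _ (by exact_mod_cast hp.out.ne_zero)))
        (Or.inl (ENNReal.pow_ne_top (ENNReal.natCast_ne_top p))),
      ← pow_add]
    congr 2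
    have : (i : ℕ) ≤ β := by omega
    omega
  have hUval : ((μZp p).prod (μZp p)) U
      = (Fintype.card ι) • ((p : ℝ≥0∞) ^ (β + 2))⁻¹ := by
    rw [hU, measure_iUnion hRdisj hRmeas, tsum_fintype]
    rw [Finset.sum_congr rfl fun t _ => hRectval t, Finset.sum_const, Finset.card_univ]
  -- μ T = μ U
  have hTval : ((μZp p).prod (μZp p)) T = ((μZp p).prod (μZp p)) U := by
    refine le_antisymm ?_ (measure_mono hUT)
    calc ((μZp p).prod (μZp p)) T ≤ ((μZp p).prod (μZp p)) (U ∪ Z) := measure_mono hTUZ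
      _ ≤ ((μZp p).prod (μZp p)) U + ((μZp p).prod (μZp p)) Z := measure_union_le _ _
      _ = ((μZp p).prod (μZp p)) U := by rw [hZnull, add_zero]
  -- cardinality
  have hcard : Fintype.card ι = (β + 1) * Fintype.card {cd : ZMod p × ZMod p // Q cd} := by
    have e : ι ≃ Fin (β + 1) × {cd : ZMod p × ZMod p // Q cd} :=
      { toFun := fun t => (t.1.1, ⟨t.1.2, t.2⟩)
        invFun := fun s => ⟨(s.1, s.2.1), s.2.2⟩
        left_inv := fun _ => rfl
        right_inv := fun _ => rfl }
    rw [Fintype.card_congr e, Fintype.card_prod, Fintype.card_fin]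
  have hcard2 : 2 * Fintype.card {cd : ZMod p × ZMod p // Q cd} = (p - 1) ^ 2 :=
    two_mul_card_pairs hp2
  -- final computation
  rw [hTval, hUval, hcard]
  set N := Fintype.card {cd : ZMod p × ZMod p // Q cd} with hN
  have hptop : ((p : ℝ≥0∞) ^ (β + 2)) ≠ ⊤ := ENNReal.pow_ne_top (ENNReal.natCast_ne_top p)
  have hpne : ((p : ℝ≥0∞) ^ (β + 2)) ≠ 0 := pow_ne_zero _ (by exact_mod_cast hp.out.ne_zero)
  rw [nsmul_eq_mul, ENNReal.toReal_mul, ENNReal.toReal_natCast, ENNReal.toReal_inv,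
    ENNReal.toReal_pow, ENNReal.toReal_natCast]
  have hNR : (N : ℝ) = ((p:ℝ) - 1) ^ 2 / 2 := by
    have h1 : ((2 * N : ℕ) : ℝ) = (((p - 1) ^ 2 : ℕ) : ℝ) := by rw [hcard2]
    have hp1 : ((p - 1 : ℕ) : ℝ) = (p : ℝ) - 1 := by
      have : 1 ≤ p := hp.out.one_le
      push_cast [this]; ring
    push_cast at h1
    rw [hp1] at h1
    linarith
  have hcast : (((β + 1) * N : ℕ) : ℝ) = ((β:ℝ) + 1) * (N:ℝ) := by push_cast; ring
  rw [hcast, hNR]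
  have hppow : (0:ℝ) < (p:ℝ) ^ (β + 2) := by positivity
  field_simp
end Main


theorem stmt7 (p : ℕ) [Fact p.Prime] (hp : p ≠ 2) (r : ℤ_[p]) (α : ℕ) (hα : 0 < α)
    (hr : r.valuation = α) (β : ℕ) (hβeven : Even β) (hβ : β < α) :
    (((μZp p).prod (μZp p)) {x : ℤ_[p] × ℤ_[p] |
        IsSquare (x.1 * x.2 + r) ∧ (x.1 * x.2 + r).valuation = β}).toReal
      = ((β:ℝ) + 1) * ((p:ℝ) - 1)^2 / (2 * (p:ℝ) ^ (β + 2)) :=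
  stmt7' hp r α hα hr β hβeven hβ
end

section
/- Let p be an odd prime and r ∈ F_p a nonzero square. The number of triples (a,b,c) ∈ F_p³ with abc = 0 such that ab + r, bc + r, ac + r are all squares in F_p equals (3p² - 1)/2. -/
open Finset

lemma cardA (p : ℕ) [Fact p.Prime] (hp : p ≠ 2) :
    2 * (Finset.univ.filter fun x : ZMod p => IsSquare x).card = p + 1 := by
  classical
  have hp2 : p.Prime := Fact.out
  have h2 : (2 : ZMod p) ≠ 0 := by
    intro h
    have : ((2 : ℕ) : ZMod p) = 0 := by push_cast; exact h
    have := (ZMod.natCast_eq_zero_iff _ _).mp this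
    exact hp ((Nat.prime_dvd_prime_iff_eq hp2 Nat.prime_two).mp this)
  have key : ∀ a : ZMod p, (Finset.univ.filter fun x : ZMod p => x * x = a).card
      = if a = 0 then 1 else if IsSquare a then 2 else 0 := by
    intro a
    by_cases ha : a = 0
    · subst ha
      rw [if_pos rfl]
      have : (Finset.univ.filter fun x : ZMod p => x * x = 0) = {0} := by
        ext x; simp [mul_self_eq_zero]
      rw [this, Finset.card_singleton]
    · rw [if_neg ha]
      by_cases hs : IsSquare a
      · rw [if_pos hs]
        obtain ⟨y, hy⟩ := hs
        have hy0 : y ≠ 0 := by rintro rfl; simp at hy; exact ha hy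
        have : (Finset.univ.filter fun x : ZMod p => x * x = a) = {y, -y} := by
          ext x
          simp only [Finset.mem_filter, Finset.mem_univ, true_and, Finset.mem_insert,
            Finset.mem_singleton, hy, mul_self_eq_mul_self_iff]
        rw [this]
        refine Finset.card_pair ?_
        intro h
        have h2y : (2 : ZMod p) * y = 0 := by
          rw [two_mul]; nth_rewrite 1 [h]; ring
        rcases mul_eq_zero.mp h2y with h' | h'
        · exact h2 h'
        · exact hy0 h'
      · rw [if_neg hs]
        rw [Finset.card_eq_zero, Finset.filter_eq_empty_iff]
        intro x _ hx
        exact hs ⟨x, hx.symm⟩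
  have hsum : (Finset.univ : Finset (ZMod p)).card
      = ∑ a : ZMod p, (Finset.univ.filter fun x : ZMod p => x * x = a).card :=
    Finset.card_eq_sum_card_fiberwise (fun x _ => Finset.mem_univ _)
  have hcard : (Finset.univ : Finset (ZMod p)).card = p := by
    rw [Finset.card_univ, ZMod.card]
  rw [hcard] at hsum
  simp_rw [key] at hsum
  rw [← Finset.sum_erase_add Finset.univ _ (Finset.mem_univ (0 : ZMod p))] at hsum
  rw [if_pos rfl] at hsum
  have herase : ∑ a ∈ Finset.univ.erase (0 : ZMod p),
      (if a = 0 then 1 else if IsSquare a then 2 else 0)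
      = ∑ a ∈ Finset.univ.erase (0 : ZMod p), (if IsSquare a then 2 else 0) := by
    refine Finset.sum_congr rfl fun a ha => ?_
    rw [if_neg (Finset.mem_erase.mp ha).1]
  rw [herase] at hsum
  have h2sum : ∑ a ∈ Finset.univ.erase (0 : ZMod p), (if IsSquare a then 2 else 0)
      = 2 * ((Finset.univ.erase (0 : ZMod p)).filter fun a => IsSquare a).card := by
    rw [Finset.card_filter, Finset.mul_sum]
    refine Finset.sum_congr rfl fun a _ => ?_
    split_ifs <;> simp
  rw [h2sum] at hsum
  have hfe : ((Finset.univ.erase (0 : ZMod p)).filter fun a => IsSquare a)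
      = ((Finset.univ.filter fun a : ZMod p => IsSquare a).erase 0) :=
    Finset.filter_erase _ _ _
  have h0mem : (0 : ZMod p) ∈ Finset.univ.filter fun a : ZMod p => IsSquare a := by
    simp only [Finset.mem_filter, Finset.mem_univ, true_and]
    exact ⟨0, by ring⟩
  have := Finset.card_erase_add_one h0mem
  rw [hfe] at hsum
  omega

lemma cardB {p : ℕ} [Fact p.Prime] (b s : ZMod p) (hb : b ≠ 0) :
    (Finset.univ.filter fun c : ZMod p => IsSquare (b * c + s)).card
      = (Finset.univ.filter fun x : ZMod p => IsSquare x).card := by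
  classical
  refine Finset.card_bij (fun c _ => b * c + s) ?_ ?_ ?_
  · intro c hc
    simp only [Finset.mem_filter, Finset.mem_univ, true_and] at hc ⊢
    exact hc
  · intro c1 h1 c2 h2 h
    have : b * c1 = b * c2 := by linear_combination h
    exact mul_left_cancel₀ hb this
  · intro t ht
    simp only [Finset.mem_filter, Finset.mem_univ, true_and] at ht
    refine ⟨b⁻¹ * (t - s), Finset.mem_filter.mpr ⟨Finset.mem_univ _, ?_⟩, ?_⟩
    · have : b * (b⁻¹ * (t - s)) + s = t := by field_simp; ring
      rw [this]; exact ht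
    · show b * (b⁻¹ * (t - s)) + s = t
      field_simp; ring

lemma cardC {p : ℕ} [Fact p.Prime] (a r : ZMod p) (ha : a ≠ 0) :
    ((Finset.univ.erase 0).filter fun b : ZMod p => IsSquare (a * b + r)).card
      = ((Finset.univ.filter fun x : ZMod p => IsSquare x).erase r).card := by
  classical
  refine Finset.card_bij (fun b _ => a * b + r) ?_ ?_ ?_
  · intro b hb
    simp only [Finset.mem_filter, Finset.mem_erase, Finset.mem_univ, true_and, and_true] at hb ⊢
    refine ⟨?_, hb.2⟩
    intro h
    have : a * b = 0 := by linear_combination h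
    rcases mul_eq_zero.mp this with h' | h'
    · exact ha h'
    · exact hb.1 h'
  · intro b1 h1 b2 h2 h
    have : a * b1 = a * b2 := by linear_combination h
    exact mul_left_cancel₀ ha this
  · intro t ht
    simp only [Finset.mem_filter, Finset.mem_erase, Finset.mem_univ, true_and, and_true] at ht
    refine ⟨a⁻¹ * (t - r), ?_, ?_⟩
    · refine Finset.mem_filter.mpr ⟨Finset.mem_erase.mpr ⟨?_, Finset.mem_univ _⟩, ?_⟩
      · intro h
        apply ht.1
        have h0 : t - r = 0 := by
          have h2 := congrArg (a * ·) h
          simp only [mul_zero] at h2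
          rw [← mul_assoc, mul_inv_cancel₀ ha, one_mul] at h2
          exact h2
        linear_combination h0
      · have : a * (a⁻¹ * (t - r)) + r = t := by field_simp; ring
        rw [this]; exact ht.2
    · show a * (a⁻¹ * (t - r)) + r = t
      field_simp; ring

theorem stmt13 (p : ℕ) [Fact p.Prime] (hp : p ≠ 2) (r : ZMod p) (hr : r ≠ 0)
    (hsq : IsSquare r) :
    (Nat.card {x : ZMod p × ZMod p × ZMod p //
        x.1 * x.2.1 * x.2.2 = 0 ∧ IsSquare (x.1 * x.2.1 + r) ∧
          IsSquare (x.2.1 * x.2.2 + r) ∧ IsSquare (x.1 * x.2.2 + r)} : ℚ)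
      = (3 * (p:ℚ)^2 - 1) / 2 := by
  classical
  have hp2 : p.Prime := Fact.out
  set S1 := (Finset.univ.filter fun x : ZMod p => IsSquare x).card with hS1def
  set T := ((Finset.univ.filter fun x : ZMod p => IsSquare x).erase r).card with hTdef
  have hrmem : r ∈ Finset.univ.filter fun x : ZMod p => IsSquare x := by
    simp only [Finset.mem_filter, Finset.mem_univ, true_and]; exact hsq
  have hT : T + 1 = S1 := Finset.card_erase_add_one hrmem
  have h2S : 2 * S1 = p + 1 := cardA p hp
  have hpcard : (Finset.univ : Finset (ZMod p)).card = p := by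
    rw [Finset.card_univ, ZMod.card]
  have hecard : (Finset.univ.erase (0 : ZMod p)).card = p - 1 := by
    rw [Finset.card_erase_of_mem (Finset.mem_univ _), hpcard]
  have hmain : Nat.card {x : ZMod p × ZMod p × ZMod p //
        x.1 * x.2.1 * x.2.2 = 0 ∧ IsSquare (x.1 * x.2.1 + r) ∧
          IsSquare (x.2.1 * x.2.2 + r) ∧ IsSquare (x.1 * x.2.2 + r)}
      = p + (p - 1) * S1 + (p - 1) * (S1 + T) := by
    rw [Nat.card_eq_fintype_card, Fintype.card_subtype]
    rw [Finset.card_filter]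
    rw [Fintype.sum_prod_type]
    simp only [Fintype.sum_prod_type]
    rw [← Finset.sum_erase_add Finset.univ _ (Finset.mem_univ (0 : ZMod p))]
    have ha0 : (∑ b : ZMod p, ∑ c : ZMod p,
        if (0 : ZMod p) * b * c = 0 ∧ IsSquare ((0 : ZMod p) * b + r) ∧
          IsSquare (b * c + r) ∧ IsSquare ((0 : ZMod p) * c + r) then 1 else 0)
        = p + (p - 1) * S1 := by
      have hb : ∀ b : ZMod p, (∑ c : ZMod p,
          if (0 : ZMod p) * b * c = 0 ∧ IsSquare ((0 : ZMod p) * b + r) ∧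
            IsSquare (b * c + r) ∧ IsSquare ((0 : ZMod p) * c + r) then 1 else 0)
          = (Finset.univ.filter fun c : ZMod p => IsSquare (b * c + r)).card := by
        intro b
        rw [Finset.card_filter]
        refine Finset.sum_congr rfl fun c _ => ?_
        refine if_congr ?_ rfl rfl
        simp [hsq]
      simp only [hb]
      rw [← Finset.sum_erase_add Finset.univ _ (Finset.mem_univ (0 : ZMod p))]
      have h00 : (Finset.univ.filter fun c : ZMod p => IsSquare ((0 : ZMod p) * c + r)).card
          = p := by
        have : (Finset.univ.filter fun c : ZMod p => IsSquare ((0 : ZMod p) * c + r))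
            = Finset.univ := by
          ext c; simp [hsq]
        rw [this, hpcard]
      rw [h00]
      have hrest : ∑ b ∈ Finset.univ.erase (0 : ZMod p),
          (Finset.univ.filter fun c : ZMod p => IsSquare (b * c + r)).card
          = (p - 1) * S1 := by
        rw [Finset.sum_congr rfl fun b hb' => cardB b r (Finset.mem_erase.mp hb').1]
        rw [Finset.sum_const, hecard, smul_eq_mul]
      rw [hrest]
      ring
    rw [ha0]
    have hane : ∀ a ∈ Finset.univ.erase (0 : ZMod p), (∑ b : ZMod p, ∑ c : ZMod p,
        if a * b * c = 0 ∧ IsSquare (a * b + r) ∧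
          IsSquare (b * c + r) ∧ IsSquare (a * c + r) then 1 else 0)
        = S1 + T := by
      intro a ha'
      have ha : a ≠ 0 := (Finset.mem_erase.mp ha').1
      rw [← Finset.sum_erase_add Finset.univ _ (Finset.mem_univ (0 : ZMod p))]
      have hb0 : (∑ c : ZMod p,
          if a * 0 * c = 0 ∧ IsSquare (a * 0 + r) ∧
            IsSquare (0 * c + r) ∧ IsSquare (a * c + r) then 1 else 0) = S1 := by
        rw [show (∑ c : ZMod p,
          if a * 0 * c = 0 ∧ IsSquare (a * 0 + r) ∧
            IsSquare (0 * c + r) ∧ IsSquare (a * c + r) then 1 else 0)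
          = (Finset.univ.filter fun c : ZMod p => IsSquare (a * c + r)).card from by
            rw [Finset.card_filter]
            exact Finset.sum_congr rfl fun c _ => if_congr (by simp [hsq]) rfl rfl]
        exact cardB a r ha
      rw [hb0]
      have hbne : ∑ b ∈ Finset.univ.erase (0 : ZMod p), (∑ c : ZMod p,
          if a * b * c = 0 ∧ IsSquare (a * b + r) ∧
            IsSquare (b * c + r) ∧ IsSquare (a * c + r) then 1 else 0)
          = T := by
        have hinner : ∀ b ∈ Finset.univ.erase (0 : ZMod p), (∑ c : ZMod p,
            if a * b * c = 0 ∧ IsSquare (a * b + r) ∧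
              IsSquare (b * c + r) ∧ IsSquare (a * c + r) then 1 else 0)
            = if IsSquare (a * b + r) then 1 else 0 := by
          intro b hb'
          have hbz : b ≠ 0 := (Finset.mem_erase.mp hb').1
          have hcond : ∀ c : ZMod p,
              (a * b * c = 0 ∧ IsSquare (a * b + r) ∧
                IsSquare (b * c + r) ∧ IsSquare (a * c + r))
              ↔ (c = 0 ∧ IsSquare (a * b + r)) := by
            intro c
            constructor
            · rintro ⟨h1, h2, -, -⟩
              rcases mul_eq_zero.mp h1 with h' | h'
              · rcases mul_eq_zero.mp h' with h'' | h''
                · exact absurd h'' ha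
                · exact absurd h'' hbz
              · exact ⟨h', h2⟩
            · rintro ⟨rfl, h2⟩
              refine ⟨by ring, h2, ?_, ?_⟩ <;> simpa using hsq
          calc (∑ c : ZMod p,
              if a * b * c = 0 ∧ IsSquare (a * b + r) ∧
                IsSquare (b * c + r) ∧ IsSquare (a * c + r) then 1 else 0)
              = ∑ c : ZMod p, if c = 0 then (if IsSquare (a * b + r) then 1 else 0) else 0 := by
                refine Finset.sum_congr rfl fun c _ => ?_
                rw [if_congr (hcond c) rfl rfl, ite_and]
            _ = if IsSquare (a * b + r) then 1 else 0 := by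
                rw [Finset.sum_ite_eq' Finset.univ (0 : ZMod p)
                  (fun _ => if IsSquare (a * b + r) then 1 else 0), if_pos (Finset.mem_univ _)]
        rw [Finset.sum_congr rfl hinner, ← Finset.card_filter]
        exact cardC a r ha
      rw [hbne]
      ring
    rw [Finset.sum_congr rfl hane, Finset.sum_const, hecard, smul_eq_mul]
    ring
  rw [hmain]
  have h2S' : 2 * (S1 : ℚ) = p + 1 := by exact_mod_cast h2S
  have hT' : (T : ℚ) + 1 = S1 := by exact_mod_cast hT
  have hp1 : (1 : ℕ) ≤ p := hp2.pos
  push_cast [Nat.cast_sub hp1]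
  linear_combination (3 * ((p : ℚ) - 1) / 2) * h2S' + ((p : ℚ) - 1) * hT'
end
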